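/- arXiv:1302.6170 — 5 statements merged into one kernel-verified Lean document; each statement's English description precedes it below -/
import Mathlib

section
/- There exists a constant M > 0 such that for every integer n ≥ 1, the n-th power of the backward difference operator D on the disc algebra, defined by (Df)(z) = (f(z) - f(0))/z, has operator norm at most M(1 + log n). -/
open Metric Complex Function Topology Filter intervalIntegral
open scoped Real

/-- The backward difference operator `D` on functions `ℂ → ℂ`:
`(Df)(z) = (f(z) - f(0))/z` for `z ≠ 0`, and `(Df)(0) = f'(0)`. -/
noncomputable def Dop (f : ℂ → ℂ) : ℂ → ℂ :=
  fun z => if z = 0 then deriv f 0 else (f z - f 0) / z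

lemma Dop_eq_dslope : Dop = Function.swap dslope 0 := by
  funext f z
  simp [Dop, dslope, Function.swap, Function.update_apply, slope, div_eq_inv_mul]

lemma Dop_iterate_apply_zero {f : ℂ → ℂ} {p : FormalMultilinearSeries ℂ ℂ ℂ}
    (hp : HasFPowerSeriesAt f p 0) (n : ℕ) : Dop^[n] f 0 = p.coeff n := by
  rw [Dop_eq_dslope]
  have h := (hp.has_fpower_series_iterate_dslope_fslope n).coeff_zero (fun _ => (1:ℂ))
  have h2 := FormalMultilinearSeries.coeff_iterate_fslope (p := p) n 0
  rw [zero_add] at h2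
  rw [← h2, ← h]
  rfl

lemma Dop_apply_ne {f : ℂ → ℂ} {z : ℂ} (hz : z ≠ 0) : Dop f z = (f z - f 0) / z := by
  simp [Dop, hz]

lemma Dop_iterate_identity {f : ℂ → ℂ} {p : FormalMultilinearSeries ℂ ℂ ℂ}
    (hp : HasFPowerSeriesAt f p 0) (n : ℕ) (z : ℂ) :
    z ^ n * Dop^[n] f z = f z - ∑ k ∈ Finset.range n, p.coeff k * z ^ k := by
  induction n with
  | zero => simp
  | succ n ih =>
    rcases eq_or_ne z 0 with rfl | hz
    · have h0 : p.coeff 0 = f 0 := hp.coeff_zero (fun _ => 1)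
      simp [Finset.sum_range_succ', h0]
    · rw [Function.iterate_succ_apply', Dop_apply_ne hz,
        Dop_iterate_apply_zero hp n, Finset.sum_range_succ]
      field_simp
      linear_combination z * ih

lemma deriv_scale (f : ℂ → ℂ) {s : ℂ} (hs : s ≠ 0) :
    deriv (fun w => f (s * w)) 0 = s * deriv f 0 := by
  by_cases hf : DifferentiableAt ℂ f 0
  · have h1 : HasDerivAt (fun w : ℂ => s * w) s 0 := by
      simpa using (hasDerivAt_id (0:ℂ)).const_mul s
    have h2 : HasDerivAt f (deriv f 0) (s * 0) := by simpa using hf.hasDerivAt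
    have h3 : HasDerivAt (fun w => f (s * w)) (deriv f 0 * s) 0 := h2.comp 0 h1
    rw [h3.deriv]; ring
  · have hg : ¬ DifferentiableAt ℂ (fun w => f (s * w)) 0 := by
      intro h
      apply hf
      have h1 : HasDerivAt (fun u : ℂ => s⁻¹ * u) s⁻¹ 0 := by
        simpa using (hasDerivAt_id (0:ℂ)).const_mul s⁻¹
      have h2 : DifferentiableAt ℂ (fun w => f (s * w)) (s⁻¹ * 0) := by simpa using h
      have h3 : DifferentiableAt ℂ ((fun w => f (s * w)) ∘ fun u : ℂ => s⁻¹ * u) 0 :=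
        h2.comp 0 h1.differentiableAt
      have h4 : ((fun w => f (s * w)) ∘ fun u : ℂ => s⁻¹ * u) = f := by
        funext u; simp [Function.comp, ← mul_assoc, mul_inv_cancel₀ hs]
      rwa [h4] at h3
    rw [deriv_zero_of_not_differentiableAt hf, deriv_zero_of_not_differentiableAt hg, mul_zero]

lemma Dop_scale (f : ℂ → ℂ) {s : ℂ} (hs : s ≠ 0) (z : ℂ) :
    Dop (fun w => f (s * w)) z = s * Dop f (s * z) := by
  rcases eq_or_ne z 0 with rfl | hz
  · simp [Dop, deriv_scale f hs]
  · have hsz : s * z ≠ 0 := mul_ne_zero hs hz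
    simp only [Dop, if_neg hz, if_neg hsz, mul_zero]
    field_simp

lemma Dop_const_mul (f : ℂ → ℂ) (c : ℂ) (z : ℂ) :
    Dop (fun w => c * f w) z = c * Dop f z := by
  rcases eq_or_ne z 0 with rfl | hz
  · simp [Dop, deriv_const_mul_field]
  · simp only [Dop, if_neg hz]; ring

lemma Dop_iterate_const_mul (f : ℂ → ℂ) (c : ℂ) (n : ℕ) (z : ℂ) :
    Dop^[n] (fun w => c * f w) z = c * Dop^[n] f z := by
  induction n generalizing f z with
  | zero => simp
  | succ n ih =>
    rw [Function.iterate_succ_apply, Function.iterate_succ_apply]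
    have h : Dop (fun w => c * f w) = fun w => c * Dop f w := funext (Dop_const_mul f c)
    rw [h]
    exact ih (Dop f) z

lemma Dop_iterate_scale (f : ℂ → ℂ) {s : ℂ} (hs : s ≠ 0) (n : ℕ) (z : ℂ) :
    Dop^[n] (fun w => f (s * w)) z = s ^ n * Dop^[n] f (s * z) := by
  induction n generalizing f z with
  | zero => simp
  | succ n ih =>
    rw [Function.iterate_succ_apply, Function.iterate_succ_apply]
    have h1 : Dop (fun w => f (s * w)) = fun w => s * Dop f (s * w) :=
      funext (Dop_scale f hs)
    rw [h1, Dop_iterate_const_mul (fun w => Dop f (s * w)) s n z, ih (Dop f) z]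
    ring


lemma Dop_differentiableOn {f : ℂ → ℂ} {R : ℝ} (hR : 0 < R)
    (hf : DifferentiableOn ℂ f (ball (0:ℂ) R)) :
    DifferentiableOn ℂ (Dop f) (ball (0:ℂ) R) := by
  rw [Dop_eq_dslope]
  intro z hz
  apply DifferentiableAt.differentiableWithinAt
  rcases eq_or_ne z 0 with rfl | hz0
  · obtain ⟨p, hp⟩ : AnalyticAt ℂ f 0 := hf.analyticAt (isOpen_ball.mem_nhds hz)
    exact (hp.has_fpower_series_dslope_fslope).analyticAt.differentiableAt
  · have hev : (fun w => (f w - f 0) / w) =ᶠ[𝓝 z] Function.swap dslope 0 f := by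
      filter_upwards [isOpen_ne.mem_nhds hz0] with w hw
      simp [Function.swap, dslope, Function.update_apply, hw, slope, div_eq_inv_mul]
    have hd : DifferentiableAt ℂ (fun w => (f w - f 0) / w) z := by
      exact (((hf.differentiableAt (isOpen_ball.mem_nhds hz)).sub
        (differentiableAt_const _)).div differentiableAt_id hz0)
    exact hd.congr_of_eventuallyEq hev.symm

lemma Dop_continuousOn {f : ℂ → ℂ}
    (hf : DifferentiableOn ℂ f (ball (0:ℂ) 1))
    (hc : ContinuousOn f (closedBall (0:ℂ) 1)) :
    ContinuousOn (Dop f) (closedBall (0:ℂ) 1) := by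
  rw [Dop_eq_dslope]
  intro z hz
  rcases eq_or_ne z 0 with rfl | hz0
  · exact (continuousAt_dslope_same.2
      (hf.differentiableAt (isOpen_ball.mem_nhds (by simp)))).continuousWithinAt
  · have hbase : ContinuousWithinAt (fun w => (f w - f 0) / w) (closedBall (0:ℂ) 1) z :=
      (((hc.continuousWithinAt hz).sub continuousWithinAt_const).div
        continuousWithinAt_id hz0)
    refine hbase.congr_of_eventuallyEq ?_ ?_
    · filter_upwards [nhdsWithin_le_nhds (isOpen_ne.mem_nhds hz0)] with w hw
      simp [Function.swap, dslope, Function.update_apply, hw, slope, div_eq_inv_mul]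
    · simp [Function.swap, dslope, Function.update_apply, hz0, slope, div_eq_inv_mul]

noncomputable def Fker (n : ℕ) (t : ℝ) : ℝ :=
  ‖∑ k ∈ Finset.range n, Complex.exp (t * Complex.I) ^ k‖

lemma Fker_continuous (n : ℕ) : Continuous (Fker n) := by
  unfold Fker
  fun_prop

lemma Fker_periodic (n : ℕ) : Function.Periodic (Fker n) (2 * π) := by
  intro t
  unfold Fker
  congr 2
  push_cast
  rw [add_mul, Complex.exp_add]
  simp [Complex.exp_two_pi_mul_I]

lemma Fker_even (n : ℕ) (t : ℝ) : Fker n (-t) = Fker n t := by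
  unfold Fker
  have h : Complex.exp ((-t : ℝ) * Complex.I) = starRingEnd ℂ (Complex.exp (t * Complex.I)) := by
    rw [← Complex.exp_conj]
    congr 1
    simp
  rw [h]
  have : ∑ k ∈ Finset.range n, (starRingEnd ℂ) (Complex.exp (t*Complex.I)) ^ k
      = (starRingEnd ℂ) (∑ k ∈ Finset.range n, Complex.exp (t*Complex.I) ^ k) := by
    rw [map_sum]
    simp [map_pow]
  rw [this, Complex.norm_conj]

lemma Fker_le_n (n : ℕ) (t : ℝ) : Fker n t ≤ n := by
  unfold Fker
  calc ‖∑ k ∈ Finset.range n, Complex.exp (t * Complex.I) ^ k‖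
      ≤ ∑ k ∈ Finset.range n, ‖Complex.exp (t * Complex.I) ^ k‖ := norm_sum_le _ _
    _ = ∑ k ∈ Finset.range n, 1 := by
        refine Finset.sum_congr rfl fun k _ => ?_
        rw [norm_pow]
        simp [Complex.norm_exp_ofReal_mul_I]
    _ = n := by simp

lemma Fker_nonneg (n : ℕ) (t : ℝ) : 0 ≤ Fker n t := norm_nonneg _

lemma norm_exp_sub_one (t : ℝ) (h0 : 0 ≤ t) (h1 : t ≤ π) :
    2 / π * t ≤ ‖Complex.exp (t * Complex.I) - 1‖ := by
  have hsin : 2 / π * (t/2) ≤ Real.sin (t/2) :=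
    Real.mul_le_sin (by linarith) (by linarith)
  have hsq : ‖Complex.exp (t * Complex.I) - 1‖^2 = 2 - 2 * Real.cos t := by
    rw [← Complex.normSq_eq_norm_sq]
    rw [Complex.exp_mul_I]
    have : (Complex.cos t + Complex.sin t * Complex.I - 1)
        = Complex.ofReal (Real.cos t - 1) + Complex.ofReal (Real.sin t) * Complex.I := by
      push_cast; ring
    rw [this, Complex.normSq_add_mul_I]
    have := Real.sin_sq_add_cos_sq t
    ring_nf
    nlinarith [Real.sin_sq_add_cos_sq t]
  have hcos : Real.cos t = 1 - 2 * Real.sin (t/2)^2 := by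
    have h2 : Real.cos (2 * (t/2)) = 1 - 2 * Real.sin (t/2)^2 := by
      rw [Real.cos_two_mul']
      nlinarith [Real.sin_sq_add_cos_sq (t/2)]
    rw [show 2 * (t/2) = t by ring] at h2
    exact h2
  have hkey : ‖Complex.exp (t * Complex.I) - 1‖^2 = (2 * Real.sin (t/2))^2 := by
    rw [hsq, hcos]; ring
  have hpos : (0:ℝ) ≤ 2 * Real.sin (t/2) := by
    have : (0:ℝ) ≤ Real.sin (t/2) := Real.sin_nonneg_of_nonneg_of_le_pi (by linarith) (by linarith)
    linarith
  have : ‖Complex.exp (t * Complex.I) - 1‖ = 2 * Real.sin (t/2) := by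
    have hn : (0:ℝ) ≤ ‖Complex.exp (t * Complex.I) - 1‖ := norm_nonneg _
    nlinarith [hkey]
  rw [this]
  calc 2/π * t = 2 * (2/π * (t/2)) := by ring
    _ ≤ 2 * Real.sin (t/2) := by linarith

lemma Fker_le_inv (n : ℕ) {t : ℝ} (h0 : 0 < t) (h1 : t ≤ π) : Fker n t ≤ π / t := by
  have hx1 : Complex.exp (t * Complex.I) ≠ 1 := by
    intro h
    rw [Complex.exp_eq_one_iff] at h
    obtain ⟨m, hm⟩ := h
    have hceq : (t : ℂ) = (m:ℂ) * (2 * π) := by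
      have hm' : (t:ℂ) * Complex.I = ((m:ℂ) * (2*π)) * Complex.I := by
        rw [hm]; ring
      exact mul_right_cancel₀ Complex.I_ne_zero hm'
    have ht : t = m * (2 * π) := by exact_mod_cast hceq
    have hpi := Real.pi_pos
    rcases le_or_gt m 0 with hm0 | hm0
    · have : (m:ℝ) * (2*π) ≤ 0 := mul_nonpos_of_nonpos_of_nonneg (by exact_mod_cast hm0) (by linarith)
      linarith
    · have hm1 : (1:ℝ) ≤ m := by exact_mod_cast hm0
      nlinarith
  unfold Fker
  rw [geom_sum_eq hx1]
  rw [norm_div]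
  have hnum : ‖Complex.exp (t * Complex.I) ^ n - 1‖ ≤ 2 := by
    calc ‖Complex.exp (t * Complex.I) ^ n - 1‖ ≤ ‖Complex.exp (t * Complex.I) ^ n‖ + ‖(1:ℂ)‖ :=
      norm_sub_le _ _
    _ ≤ 2 := by
        rw [norm_pow, Complex.norm_exp_ofReal_mul_I]
        norm_num
  have hden := norm_exp_sub_one t h0.le h1
  have hdenpos : 0 < 2/π * t := by positivity
  calc ‖Complex.exp (t * Complex.I) ^ n - 1‖ / ‖Complex.exp (t * Complex.I) - 1‖
      ≤ 2 / ‖Complex.exp (t * Complex.I) - 1‖ := by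
        have hbpos : 0 < ‖Complex.exp (t * Complex.I) - 1‖ := lt_of_lt_of_le hdenpos hden
        exact (div_le_div_iff_of_pos_right hbpos).mpr hnum
    _ ≤ 2 / (2/π * t) := by
        exact div_le_div_of_nonneg_left (by norm_num) hdenpos hden
    _ = π / t := by
        have h5 : 2/π*t = 2*t/π := by ring
        rw [h5, div_div_eq_mul_div]
        rw [mul_comm (2:ℝ) π, mul_comm (2:ℝ) t]
        rw [mul_div_mul_right _ _ (two_ne_zero)]

lemma Fker_intervalIntegrable (n : ℕ) (a b : ℝ) :
    IntervalIntegrable (Fker n) MeasureTheory.volume a b :=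
  (Fker_continuous n).intervalIntegrable a b

lemma Fker_integral_le (n : ℕ) (hn : 1 ≤ n) (φ : ℝ) :
    ∫ θ in (0:ℝ)..(2*π), Fker n (φ - θ) ≤ 2*π*(1 + Real.log n) := by
  have hpi := Real.pi_pos
  have hn0 : (0:ℝ) < n := by exact_mod_cast hn
  have h1 : ∫ θ in (0:ℝ)..(2*π), Fker n (φ - θ) = ∫ θ in (φ - 2*π)..φ, Fker n θ := by
    rw [intervalIntegral.integral_comp_sub_left (Fker n) φ]
    rw [sub_zero]
  have h2 : ∫ θ in (φ - 2*π)..φ, Fker n θ = ∫ θ in (-π)..π, Fker n θ := by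
    have := (Fker_periodic n).intervalIntegral_add_eq (φ - 2*π) (-π)
    rw [sub_add_cancel] at this
    rw [this]
    norm_num
    ring_nf
  have h3 : ∫ θ in (-π)..(π:ℝ), Fker n θ =
      (∫ θ in (-π)..(0:ℝ), Fker n θ) + ∫ θ in (0:ℝ)..π, Fker n θ :=
    (intervalIntegral.integral_add_adjacent_intervals
      (Fker_intervalIntegrable n _ _) (Fker_intervalIntegrable n _ _)).symm
  have h4 : ∫ θ in (-π)..(0:ℝ), Fker n θ = ∫ θ in (0:ℝ)..π, Fker n θ := by
    have hc := intervalIntegral.integral_comp_neg (a := (0:ℝ)) (b := π) (Fker n)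
    rw [neg_zero] at hc
    rw [← hc]
    simp only [Fker_even]
  have hn1 : (1:ℝ) ≤ n := by exact_mod_cast hn
  have hmem : π / n ≤ π := by
    rw [div_le_iff₀ hn0]
    nlinarith
  have hpn : 0 < π / n := by positivity
  have h5 : ∫ θ in (0:ℝ)..π, Fker n θ =
      (∫ θ in (0:ℝ)..(π/n), Fker n θ) + ∫ θ in (π/n)..π, Fker n θ :=
    (intervalIntegral.integral_add_adjacent_intervals
      (Fker_intervalIntegrable n _ _) (Fker_intervalIntegrable n _ _)).symm
  have h6 : ∫ θ in (0:ℝ)..(π/n), Fker n θ ≤ π := by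
    have := intervalIntegral.integral_mono_on (a := (0:ℝ)) (b := π/n) hpn.le
      (Fker_intervalIntegrable n _ _) (_root_.intervalIntegrable_const (c := (n:ℝ)))
      (fun x _ => Fker_le_n n x)
    calc ∫ θ in (0:ℝ)..(π/n), Fker n θ ≤ ∫ _ in (0:ℝ)..(π/n), (n:ℝ) := this
      _ = (π/n) * n := by simp [smul_eq_mul]
      _ = π := by field_simp
  have hinv : IntervalIntegrable (fun t : ℝ => π / t) MeasureTheory.volume (π/n) π := by
    apply ContinuousOn.intervalIntegrable
    apply ContinuousOn.div continuousOn_const continuousOn_id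
    intro x hx
    rw [Set.uIcc_of_le hmem] at hx
    have := hx.1
    intro h0
    simp only [id] at h0
    rw [h0] at this
    linarith
  have h7 : ∫ θ in (π/n)..π, Fker n θ ≤ π * Real.log n := by
    have hmono := intervalIntegral.integral_mono_on (a := π/n) (b := π) hmem
      (Fker_intervalIntegrable n _ _) hinv
      (fun x hx => Fker_le_inv n (lt_of_lt_of_le hpn hx.1) hx.2)
    have heval : ∫ t in (π/n)..π, π / t = π * Real.log n := by
      have hne : ∀ t ∈ Set.uIcc (π/n) π, t ≠ 0 := by
        intro t ht h0
        rw [Set.uIcc_of_le hmem] at ht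
        have := ht.1; rw [h0] at this; linarith
      have : ∫ t in (π/n)..π, π / t = π * ∫ t in (π/n)..π, t⁻¹ := by
        simp only [div_eq_mul_inv]
        exact intervalIntegral.integral_const_mul π _
      rw [this, integral_inv (by
        intro hmem0
        exact (hne 0 hmem0) rfl)]
      congr 1
      rw [div_div_eq_mul_div]
      rw [mul_comm π (n:ℝ), mul_div_assoc]
      rw [div_self hpi.ne', mul_one]
    exact hmono.trans heval.le
  rw [h1, h2, h3, h4, h5]
  have hlog : 0 ≤ Real.log n := Real.log_nonneg (by exact_mod_cast hn)
  nlinarith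

lemma partial_sum_bound {g : ℂ → ℂ} (hg : DifferentiableOn ℂ g (closedBall (0:ℂ) 1))
    {S : ℝ} (hS : ∀ w : ℂ, ‖w‖ = 1 → ‖g w‖ ≤ S)
    {n : ℕ} (hn : 1 ≤ n) {z : ℂ} (hz : ‖z‖ = 1) :
    ‖∑ k ∈ Finset.range n, (cauchyPowerSeries g 0 1).coeff k * z ^ k‖ ≤ (1 + Real.log n) * S := by
  set p := cauchyPowerSeries g 0 1 with hp
  have hgc : ContinuousOn g (sphere (0:ℂ) 1) := hg.continuousOn.mono sphere_subset_closedBall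
  have hG : Continuous fun θ : ℝ => g (circleMap 0 1 θ) :=
    hgc.comp_continuous (continuous_circleMap 0 1) (fun θ => circleMap_mem_sphere 0 one_pos.le θ)
  have hcm : ∀ θ : ℝ, circleMap 0 1 θ ≠ 0 := fun θ => circleMap_ne_center one_ne_zero
  have hintk : ∀ k : ℕ, IntervalIntegrable (fun θ : ℝ => deriv (circleMap 0 1) θ •
      ((z / (circleMap 0 1 θ - 0))^k • ((circleMap 0 1 θ - 0)⁻¹ • g (circleMap 0 1 θ))))
      MeasureTheory.volume 0 (2*π) := by
    intro k
    apply Continuous.intervalIntegrable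
    simp only [deriv_circleMap, smul_eq_mul, sub_zero]
    exact ((continuous_circleMap 0 1).mul continuous_const).mul
      (((continuous_const.div (continuous_circleMap 0 1) hcm).pow k).mul
        (((continuous_circleMap 0 1).inv₀ hcm).mul hG))
  have hsum_eq : ∑ k ∈ Finset.range n, p.coeff k * z^k =
      (2*π*Complex.I:ℂ)⁻¹ • ∫ θ in (0:ℝ)..(2*π), (circleMap 0 1 θ * Complex.I) *
        ((∑ k ∈ Finset.range n, (z / circleMap 0 1 θ)^k) *
          ((circleMap 0 1 θ)⁻¹ * g (circleMap 0 1 θ))) := by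
    have h1 : ∀ k, p.coeff k * z^k = (2*π*Complex.I:ℂ)⁻¹ •
        ∮ w in C(0,1), (z/(w-0))^k • ((w - 0)⁻¹ • g w) := by
      intro k
      have ha := FormalMultilinearSeries.apply_eq_pow_smul_coeff (p := p) (z := z) (n := k)
      have hb := cauchyPowerSeries_apply g 0 1 k z
      rw [← hp] at hb
      rw [← hb, ha, smul_eq_mul, mul_comm]
    calc ∑ k ∈ Finset.range n, p.coeff k * z ^ k
        = ∑ k ∈ Finset.range n, (2*π*Complex.I:ℂ)⁻¹ •
            ∮ w in C(0,1), (z/(w-0))^k • ((w - 0)⁻¹ • g w) := Finset.sum_congr rfl fun k _ => h1 k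
      _ = (2*π*Complex.I:ℂ)⁻¹ • ∑ k ∈ Finset.range n,
            ∮ w in C(0,1), (z/(w-0))^k • ((w - 0)⁻¹ • g w) := by rw [Finset.smul_sum]
      _ = (2*π*Complex.I:ℂ)⁻¹ • ∫ θ in (0:ℝ)..(2*π), (circleMap 0 1 θ * Complex.I) *
            ((∑ k ∈ Finset.range n, (z / circleMap 0 1 θ)^k) *
              ((circleMap 0 1 θ)⁻¹ * g (circleMap 0 1 θ))) := by
          congr 1
          simp only [circleIntegral]
          rw [← intervalIntegral.integral_finset_sum (fun k _ => hintk k)]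
          congr 1
          funext θ
          simp only [deriv_circleMap, smul_eq_mul, sub_zero, Finset.sum_mul, Finset.mul_sum]
  -- norm of the kernel equals Fker
  have hzexp : Complex.exp (Complex.arg z * Complex.I) = z := by
    have := Complex.norm_mul_exp_arg_mul_I z
    rwa [show ‖z‖ = 1 from hz, Complex.ofReal_one, one_mul]
      at this
  have hker : ∀ θ : ℝ, ‖∑ k ∈ Finset.range n, (z / circleMap 0 1 θ)^k‖
      = Fker n (Complex.arg z - θ) := by
    intro θ
    have hdiv : z / circleMap 0 1 θ = Complex.exp ((Complex.arg z - θ : ℝ) * Complex.I) := by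
      have hcm1 : circleMap 0 1 θ = Complex.exp (θ * Complex.I) := by
        simp [circleMap]
      rw [hcm1]
      conv_lhs => rw [← hzexp]
      rw [← Complex.exp_sub]
      congr 1
      push_cast
      ring
    rw [Fker]
    rw [hdiv]
  -- bound
  have hS0 : 0 ≤ S := le_trans (norm_nonneg _) (hS 1 (by simp))
  have hpi := Real.pi_pos
  rw [hsum_eq, norm_smul]
  have hnrm : ‖(2*π*Complex.I:ℂ)⁻¹‖ = (2*π)⁻¹ := by
    rw [norm_inv]
    have h2 : (2*π*Complex.I:ℂ) = ((2*π:ℝ):ℂ) * Complex.I := by push_cast; ring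
    rw [h2, norm_mul, Complex.norm_real, Complex.norm_I, mul_one,
      Real.norm_eq_abs, abs_of_pos (by positivity)]
  rw [hnrm]
  have hbd : ‖∫ θ in (0:ℝ)..(2*π), (circleMap 0 1 θ * Complex.I) *
        ((∑ k ∈ Finset.range n, (z / circleMap 0 1 θ)^k) *
          ((circleMap 0 1 θ)⁻¹ * g (circleMap 0 1 θ)))‖
      ≤ 2*π*(1 + Real.log n) * S := by
    have hptw : ∀ θ : ℝ, ‖(circleMap 0 1 θ * Complex.I) *
        ((∑ k ∈ Finset.range n, (z / circleMap 0 1 θ)^k) *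
          ((circleMap 0 1 θ)⁻¹ * g (circleMap 0 1 θ)))‖
        = Fker n (Complex.arg z - θ) * ‖g (circleMap 0 1 θ)‖ := by
      intro θ
      simp only [norm_mul, norm_inv, hker θ]
      simp only [norm_circleMap_zero, Complex.norm_I, abs_one]
      norm_num
    have hInt1 : IntervalIntegrable (fun θ : ℝ => Fker n (Complex.arg z - θ) *
        ‖g (circleMap 0 1 θ)‖) MeasureTheory.volume 0 (2*π) := by
      apply Continuous.intervalIntegrable
      exact ((Fker_continuous n).comp (continuous_const.sub continuous_id)).mul hG.norm
    have hInt2 : IntervalIntegrable (fun θ : ℝ => Fker n (Complex.arg z - θ) * S)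
        MeasureTheory.volume 0 (2*π) := by
      apply Continuous.intervalIntegrable
      exact ((Fker_continuous n).comp (continuous_const.sub continuous_id)).mul continuous_const
    calc ‖∫ θ in (0:ℝ)..(2*π), (circleMap 0 1 θ * Complex.I) *
            ((∑ k ∈ Finset.range n, (z / circleMap 0 1 θ)^k) *
              ((circleMap 0 1 θ)⁻¹ * g (circleMap 0 1 θ)))‖
        ≤ ∫ θ in (0:ℝ)..(2*π), ‖(circleMap 0 1 θ * Complex.I) *
            ((∑ k ∈ Finset.range n, (z / circleMap 0 1 θ)^k) *
              ((circleMap 0 1 θ)⁻¹ * g (circleMap 0 1 θ)))‖ :=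
          intervalIntegral.norm_integral_le_integral_norm (by positivity)
      _ = ∫ θ in (0:ℝ)..(2*π), Fker n (Complex.arg z - θ) * ‖g (circleMap 0 1 θ)‖ :=
          intervalIntegral.integral_congr (fun θ _ => hptw θ)
      _ ≤ ∫ θ in (0:ℝ)..(2*π), Fker n (Complex.arg z - θ) * S := by
          apply intervalIntegral.integral_mono_on (by positivity) hInt1 hInt2
          intro θ _
          apply mul_le_mul_of_nonneg_left _ (Fker_nonneg n _)
          apply hS
          simp [norm_circleMap_zero]
      _ = (∫ θ in (0:ℝ)..(2*π), Fker n (Complex.arg z - θ)) * S :=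
          intervalIntegral.integral_mul_const S _
      _ ≤ 2*π*(1 + Real.log n) * S :=
          mul_le_mul_of_nonneg_right (Fker_integral_le n hn _) hS0
  calc (2*π)⁻¹ * ‖_‖ ≤ (2*π)⁻¹ * (2*π*(1 + Real.log n) * S) := by
        exact mul_le_mul_of_nonneg_left hbd (by positivity)
    _ = (1 + Real.log n) * S := by field_simp

lemma main_estimate {g : ℂ → ℂ} {R : ℝ} (hR : 1 < R)
    (hg : DifferentiableOn ℂ g (ball (0:ℂ) R))
    {S : ℝ} (hS : ∀ w ∈ closedBall (0:ℂ) 1, ‖g w‖ ≤ S)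
    {n : ℕ} (hn : 1 ≤ n) :
    ∀ z ∈ closedBall (0:ℂ) 1, ‖Dop^[n] g z‖ ≤ 2 * (1 + Real.log n) * S := by
  have hS0 : 0 ≤ S := le_trans (norm_nonneg (g 0)) (hS 0 (by simp))
  have hlog : 0 ≤ Real.log n := Real.log_nonneg (by exact_mod_cast hn)
  have hg1 : DifferentiableOn ℂ g (closedBall (0:ℂ) ((1:NNReal):ℝ)) := by
    rw [NNReal.coe_one]
    exact hg.mono (closedBall_subset_ball hR)
  have hps := hg1.hasFPowerSeriesOnBall one_pos
  have hpat : HasFPowerSeriesAt g (cauchyPowerSeries g 0 ((1:NNReal):ℝ)) 0 :=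
    hps.hasFPowerSeriesAt
  rw [NNReal.coe_one] at hpat
  have hgc : DifferentiableOn ℂ g (closedBall (0:ℂ) 1) := by
    rw [NNReal.coe_one] at hg1; exact hg1
  -- bound on the sphere
  have hsphere : ∀ z : ℂ, ‖z‖ = 1 → ‖Dop^[n] g z‖ ≤ (2 + Real.log n) * S := by
    intro z hz
    have hid := Dop_iterate_identity hpat n z
    have hnz : ‖z ^ n * Dop^[n] g z‖ = ‖Dop^[n] g z‖ := by
      rw [norm_mul, norm_pow, hz, one_pow, one_mul]
    rw [← hnz, hid]
    have h1 : ‖g z‖ ≤ S := hS z (by rw [mem_closedBall, dist_zero_right]; exact hz.le)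
    have h2 := partial_sum_bound hgc (fun w hw => hS w
      (by rw [mem_closedBall, dist_zero_right]; exact hw.le)) hn hz
    calc ‖g z - ∑ k ∈ Finset.range n, (cauchyPowerSeries g 0 1).coeff k * z ^ k‖
        ≤ ‖g z‖ + ‖∑ k ∈ Finset.range n, (cauchyPowerSeries g 0 1).coeff k * z ^ k‖ :=
          norm_sub_le _ _
      _ ≤ S + (1 + Real.log n) * S := add_le_add h1 h2
      _ = (2 + Real.log n) * S := by ring
  -- differentiability of the iterate
  have hiter : ∀ m : ℕ, DifferentiableOn ℂ (Dop^[m] g) (ball (0:ℂ) R) := by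
    intro m
    induction m with
    | zero => exact hg
    | succ m ih =>
      rw [Function.iterate_succ_apply']
      exact Dop_differentiableOn (by linarith) ih
  -- maximum principle
  intro z hz
  have hcl : closure (ball (0:ℂ) 1) = closedBall (0:ℂ) 1 := closure_ball 0 one_ne_zero
  have hsub : closedBall (0:ℂ) 1 ⊆ ball (0:ℂ) R := closedBall_subset_ball hR
  have hdc : DiffContOnCl ℂ (Dop^[n] g) (ball (0:ℂ) 1) := by
    constructor
    · exact (hiter n).mono (ball_subset_ball hR.le)
    · rw [hcl]
      exact ((hiter n).continuousOn).mono hsub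
  have hmax := Complex.norm_le_of_forall_mem_frontier_norm_le
    (isBounded_ball (x := (0:ℂ)) (r := 1)) hdc
    (C := (2 + Real.log n) * S) ?_ (by rw [hcl]; exact hz)
  · calc ‖Dop^[n] g z‖ ≤ (2 + Real.log n) * S := hmax
      _ ≤ 2 * (1 + Real.log n) * S := by nlinarith
  · intro w hw
    rw [frontier_ball 0 one_ne_zero, mem_sphere_zero_iff_norm] at hw
    exact hsphere w hw

/-- There exists a constant `M > 0` such that for every `n ≥ 1`, the `n`-th power of the
backward difference operator `D` on the disc algebra has norm at most `M (1 + log n)`: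
for every `f` holomorphic on the open unit disc and continuous on the closed disc,
`‖(Dⁿ f)(z)‖ ≤ M (1 + log n) ‖f‖_∞` for all `z` in the closed disc. -/
theorem norm_Dop_pow_le :
    ∃ M > (0 : ℝ), ∀ n : ℕ, 1 ≤ n → ∀ f : ℂ → ℂ,
      DifferentiableOn ℂ f (ball (0 : ℂ) 1) →
      ContinuousOn f (closedBall (0 : ℂ) 1) →
      ∀ z ∈ closedBall (0 : ℂ) 1,
        ‖(Dop^[n] f) z‖ ≤ M * (1 + Real.log n) * ⨆ w : closedBall (0 : ℂ) 1, ‖f w‖ := by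
  refine ⟨2, two_pos, ?_⟩
  intro n hn f hd hc z hz
  set Cf := ⨆ w : closedBall (0:ℂ) 1, ‖f w‖ with hCf
  obtain ⟨C0, hC0⟩ := (isCompact_closedBall (0:ℂ) 1).exists_bound_of_continuousOn hc
  have hbdd : BddAbove (Set.range fun w : closedBall (0:ℂ) 1 => ‖f w‖) := by
    refine ⟨C0, ?_⟩
    rintro x ⟨w, rfl⟩
    exact hC0 w w.2
  have hle : ∀ w ∈ closedBall (0:ℂ) 1, ‖f w‖ ≤ Cf := fun w hw =>
    le_ciSup hbdd (⟨w, hw⟩ : closedBall (0:ℂ) 1)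
  have hCf0 : (0:ℝ) ≤ Cf := le_trans (norm_nonneg (f 0)) (hle 0 (by simp))
  -- interior bound
  have hball : ∀ w ∈ ball (0:ℂ) 1, ‖Dop^[n] f w‖ ≤ 2 * (1 + Real.log n) * Cf := by
    intro w hw
    rw [mem_ball, dist_zero_right] at hw
    have key : ∀ s : ℝ, ‖w‖ < s → s < 1 →
        s^n * ‖Dop^[n] f w‖ ≤ 2 * (1 + Real.log n) * Cf := by
      intro s hs1 hs2
      have hs0 : 0 < s := lt_of_le_of_lt (norm_nonneg w) hs1
      have hsC : (s:ℂ) ≠ 0 := by exact_mod_cast hs0.ne'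
      have hgd : DifferentiableOn ℂ (fun u : ℂ => f ((s:ℂ) * u)) (ball (0:ℂ) (1/s)) := by
        intro u hu
        rw [mem_ball, dist_zero_right] at hu
        apply DifferentiableAt.differentiableWithinAt
        have hsu : (s:ℂ) * u ∈ ball (0:ℂ) 1 := by
          rw [mem_ball, dist_zero_right, norm_mul, Complex.norm_real, Real.norm_eq_abs,
            abs_of_pos hs0]
          calc s * ‖u‖ < s * (1/s) := by exact mul_lt_mul_of_pos_left hu hs0
            _ = 1 := by field_simp
        have houter := hd.differentiableAt (isOpen_ball.mem_nhds hsu)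
        have hinner : DifferentiableAt ℂ (fun u : ℂ => (s:ℂ) * u) u :=
          differentiableAt_id.const_mul _
        exact (houter.comp u hinner :)
      have hgS : ∀ u ∈ closedBall (0:ℂ) 1, ‖f ((s:ℂ) * u)‖ ≤ Cf := by
        intro u hu
        rw [mem_closedBall, dist_zero_right] at hu
        apply hle
        rw [mem_closedBall, dist_zero_right, norm_mul, Complex.norm_real, Real.norm_eq_abs,
          abs_of_pos hs0]
        calc s * ‖u‖ ≤ s * 1 := mul_le_mul_of_nonneg_left hu hs0.le
          _ ≤ 1 := by linarith
      have hw1 : (s:ℂ)⁻¹ * w ∈ closedBall (0:ℂ) 1 := by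
        rw [mem_closedBall, dist_zero_right, norm_mul, norm_inv, Complex.norm_real,
          Real.norm_eq_abs, abs_of_pos hs0]
        rw [inv_mul_le_iff₀ hs0]
        nlinarith [norm_nonneg w]
      have hmain := main_estimate (show (1:ℝ) < 1/s by rw [lt_div_iff₀ hs0]; linarith)
        hgd hgS hn ((s:ℂ)⁻¹ * w) hw1
      rw [Dop_iterate_scale f hsC n ((s:ℂ)⁻¹ * w)] at hmain
      rw [show (s:ℂ) * ((s:ℂ)⁻¹ * w) = w by field_simp] at hmain
      rw [norm_mul, norm_pow, Complex.norm_real, Real.norm_eq_abs, abs_of_pos hs0] at hmain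
      exact hmain
    have htend : Filter.Tendsto (fun s : ℝ => s^n * ‖Dop^[n] f w‖) (𝓝[<] (1:ℝ))
        (𝓝 (‖Dop^[n] f w‖)) := by
      have hconts : Continuous fun s : ℝ => s^n * ‖Dop^[n] f w‖ := by fun_prop
      have := (hconts.tendsto 1).mono_left (nhdsWithin_le_nhds (s := Set.Iio (1:ℝ)))
      simpa using this
    apply le_of_tendsto htend
    filter_upwards [Ioo_mem_nhdsLT_of_mem (show (1:ℝ) ∈ Set.Ioc ‖w‖ 1 from ⟨hw, le_refl 1⟩)]
      with s hs
    exact key s hs.1 hs.2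
  -- pass to the closure
  have hcl : closure (ball (0:ℂ) 1) = closedBall (0:ℂ) 1 := closure_ball 0 one_ne_zero
  have hcont : ContinuousOn (Dop^[n] f) (closedBall (0:ℂ) 1) := by
    have hpair : ∀ m : ℕ, DifferentiableOn ℂ (Dop^[m] f) (ball (0:ℂ) 1) ∧
        ContinuousOn (Dop^[m] f) (closedBall (0:ℂ) 1) := by
      intro m
      induction m with
      | zero => exact ⟨hd, hc⟩
      | succ m ih =>
        rw [Function.iterate_succ_apply']
        exact ⟨Dop_differentiableOn one_pos ih.1, Dop_continuousOn ih.1 ih.2⟩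
    exact (hpair n).2
  have hzcl : z ∈ closure (ball (0:ℂ) 1) := by rwa [hcl]
  have hnb : (𝓝[ball (0:ℂ) 1] z).NeBot := mem_closure_iff_nhdsWithin_neBot.1 hzcl
  have htd : Filter.Tendsto (fun w => ‖Dop^[n] f w‖) (𝓝[ball (0:ℂ) 1] z)
      (𝓝 ‖Dop^[n] f z‖) := by
    have := (hcont z hz).norm
    exact this.tendsto.mono_left (nhdsWithin_mono z ball_subset_closedBall)
  exact le_of_tendsto htd (eventually_nhdsWithin_of_forall hball)
end

section
/- Let T₁ ∈ B(H₁) and T₂ ∈ B(H₂) be polynomially bounded operators, and let X : H₂ → H₁ be a bounded operator such that T₁^N X T₂^N = 0 for some integer N ≥ 0. Then the block operator R = [[T₁, X],[0, T₂]] on H₁ ⊕ H₂ is polynomially bounded: there exists C > 0 with ‖φ(R)‖ ≤ C‖φ‖_∞ for all polynomials φ. -/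
open Metric ContinuousLinearMap
open Polynomial Filter Set

/-- The sup norm of a polynomial over the open unit disc. -/
noncomputable def discSupNorm (φ : Polynomial ℂ) : ℝ :=
  ⨆ z : ball (0 : ℂ) 1, ‖φ.eval (z : ℂ)‖

lemma discSupNorm_bddAbove (φ : Polynomial ℂ) :
    BddAbove (Set.range fun z : ball (0 : ℂ) 1 => ‖φ.eval (z : ℂ)‖) := by
  refine ⟨∑ i ∈ Finset.range (φ.natDegree + 1), ‖φ.coeff i‖, ?_⟩
  rintro _ ⟨⟨z, hz⟩, rfl⟩
  simp only [mem_ball, dist_zero_right] at hz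
  show ‖Polynomial.eval z φ‖ ≤ _
  rw [Polynomial.eval_eq_sum_range]
  refine (norm_sum_le _ _).trans (Finset.sum_le_sum fun i _ => ?_)
  rw [norm_mul, norm_pow]
  exact mul_le_of_le_one_right (norm_nonneg _) (pow_le_one₀ (norm_nonneg z) hz.le)

lemma norm_eval_le_discSupNorm (φ : Polynomial ℂ) {z : ℂ} (hz : z ∈ ball (0 : ℂ) 1) :
    ‖φ.eval z‖ ≤ discSupNorm φ :=
  le_ciSup (discSupNorm_bddAbove φ) (⟨z, hz⟩ : ball (0 : ℂ) 1)

lemma discSupNorm_nonneg (φ : Polynomial ℂ) : 0 ≤ discSupNorm φ :=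
  le_trans (norm_nonneg _) (norm_eval_le_discSupNorm φ (by simp : (0:ℂ) ∈ ball (0:ℂ) 1))

lemma discSupNorm_le {φ : Polynomial ℂ} {C : ℝ} (h : ∀ z ∈ ball (0 : ℂ) 1, ‖φ.eval z‖ ≤ C) :
    discSupNorm φ ≤ C := by
  haveI : Nonempty (ball (0 : ℂ) 1) := ⟨⟨0, by simp⟩⟩
  exact ciSup_le fun z => h z z.2

lemma discSupNorm_divX_le (φ : Polynomial ℂ) : discSupNorm φ.divX ≤ 2 * discSupNorm φ := by
  set D := discSupNorm φ with hD
  apply discSupNorm_le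
  intro z hz
  rw [mem_ball, dist_zero_right] at hz
  have hcoeff : ‖φ.coeff 0‖ ≤ D := by
    have := norm_eval_le_discSupNorm φ (z := 0) (by simp)
    simpa [Polynomial.coeff_zero_eq_eval_zero, hD] using this
  have key : ∀ r : ℝ, r ∈ Ioo ‖z‖ 1 → ‖φ.divX.eval z‖ ≤ 2 * D / r := by
    intro r hr
    have hr0 : 0 < r := lt_of_le_of_lt (norm_nonneg z) hr.1
    refine Complex.norm_le_of_forall_mem_frontier_norm_le (isBounded_ball (x := (0:ℂ)) (r := r))
      ((φ.divX.differentiable).diffContOnCl) ?_ ?_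
    · intro w hw
      rw [frontier_ball _ hr0.ne', mem_sphere_zero_iff_norm] at hw
      have hw1 : ‖w‖ < 1 := by rw [hw]; exact hr.2
      have hevw : ‖φ.eval w‖ ≤ D := norm_eval_le_discSupNorm φ (by simpa [mem_ball, dist_zero_right] using hw1)
      have heq : φ.divX.eval w * w = φ.eval w - φ.coeff 0 := by
        conv_rhs => rw [← φ.divX_mul_X_add]
        simp
      rw [div_eq_inv_mul, ← hw]
      rw [le_inv_mul_iff₀ (by rw [hw]; exact hr0), mul_comm]
      calc ‖φ.divX.eval w‖ * ‖w‖ = ‖φ.divX.eval w * w‖ := (norm_mul _ _).symm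
        _ = ‖φ.eval w - φ.coeff 0‖ := by rw [heq]
        _ ≤ ‖φ.eval w‖ + ‖φ.coeff 0‖ := norm_sub_le _ _
        _ ≤ D + D := add_le_add hevw hcoeff
        _ = 2 * D := by ring
    · exact subset_closure (by simpa [mem_ball, dist_zero_right] using hr.1)
  have t : Tendsto (fun r : ℝ => 2 * D / r) (nhdsWithin 1 (Iio 1)) (nhds (2 * D)) := by
    have : Tendsto (fun r : ℝ => 2 * D / r) (nhds 1) (nhds (2 * D / 1)) :=
      tendsto_const_nhds.div tendsto_id one_ne_zero
    simpa using this.mono_left nhdsWithin_le_nhds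
  exact ge_of_tendsto t (eventually_of_mem (Ioo_mem_nhdsLT_of_mem ⟨hz, le_refl 1⟩) key)

lemma coeff_divX_iterate (φ : Polynomial ℂ) (n m : ℕ) :
    (Polynomial.divX^[n] φ).coeff m = φ.coeff (m + n) := by
  induction n generalizing φ with
  | zero => simp
  | succ n ih =>
    rw [Function.iterate_succ_apply, ih, coeff_divX]
    ring_nf

lemma natDegree_divX_iterate_le (φ : Polynomial ℂ) (n : ℕ) :
    (Polynomial.divX^[n] φ).natDegree ≤ φ.natDegree := by
  induction n generalizing φ with
  | zero => simp
  | succ n ih =>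
    rw [Function.iterate_succ_apply]
    exact (ih _).trans natDegree_divX_le

lemma discSupNorm_divX_iterate_le (φ : Polynomial ℂ) (n : ℕ) :
    discSupNorm (Polynomial.divX^[n] φ) ≤ 2 ^ n * discSupNorm φ := by
  induction n generalizing φ with
  | zero => simp
  | succ n ih =>
    rw [Function.iterate_succ_apply]
    calc discSupNorm (Polynomial.divX^[n] φ.divX) ≤ 2 ^ n * discSupNorm φ.divX := ih _
      _ ≤ 2 ^ n * (2 * discSupNorm φ) := by
          have := discSupNorm_divX_le φ
          gcongr
      _ = 2 ^ (n + 1) * discSupNorm φ := by ring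

lemma norm_coeff_le (φ : Polynomial ℂ) (n : ℕ) : ‖φ.coeff n‖ ≤ 2 ^ n * discSupNorm φ := by
  have h : φ.coeff n = (Polynomial.divX^[n] φ).eval 0 := by
    rw [← coeff_zero_eq_eval_zero, coeff_divX_iterate, Nat.zero_add]
  rw [h]
  exact (norm_eval_le_discSupNorm _ (by simp)).trans (discSupNorm_divX_iterate_le φ n)

section Blk
variable {H₁ H₂ : Type*} [NormedAddCommGroup H₁] [NormedSpace ℂ H₁]
  [NormedAddCommGroup H₂] [NormedSpace ℂ H₂]

noncomputable def Blk (A : H₁ →L[ℂ] H₁) (Y : H₂ →L[ℂ] H₁) (B : H₂ →L[ℂ] H₂) :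
    H₁ × H₂ →L[ℂ] H₁ × H₂ :=
  (A.comp (fst ℂ H₁ H₂) + Y.comp (snd ℂ H₁ H₂)).prod (B.comp (snd ℂ H₁ H₂))

lemma Blk_apply (A : H₁ →L[ℂ] H₁) (Y : H₂ →L[ℂ] H₁) (B : H₂ →L[ℂ] H₂) (p : H₁ × H₂) :
    Blk A Y B p = (A p.1 + Y p.2, B p.2) := rfl

lemma Blk_mul (A A' : H₁ →L[ℂ] H₁) (Y Y' : H₂ →L[ℂ] H₁) (B B' : H₂ →L[ℂ] H₂) :
    (Blk A Y B).comp (Blk A' Y' B') =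
      Blk (A.comp A') (A.comp Y' + Y.comp B') (B.comp B') := by
  ext p <;> simp [Blk_apply, map_add]

lemma Blk_one : (Blk 1 0 1 : H₁ × H₂ →L[ℂ] H₁ × H₂) = 1 := by
  ext p <;> simp [Blk_apply]

lemma Blk_smul (c : ℂ) (A : H₁ →L[ℂ] H₁) (Y : H₂ →L[ℂ] H₁) (B : H₂ →L[ℂ] H₂) :
    c • Blk A Y B = Blk (c • A) (c • Y) (c • B) := by
  ext p <;> simp [Blk_apply, smul_add]

lemma Blk_sum {ι : Type*} (s : Finset ι) (A : ι → (H₁ →L[ℂ] H₁)) (Y : ι → (H₂ →L[ℂ] H₁))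
    (B : ι → (H₂ →L[ℂ] H₂)) :
    ∑ i ∈ s, Blk (A i) (Y i) (B i) = Blk (∑ i ∈ s, A i) (∑ i ∈ s, Y i) (∑ i ∈ s, B i) := by
  classical
  induction s using Finset.induction with
  | empty => ext p <;> simp [Blk_apply]
  | insert _ _ h ih =>
    rw [Finset.sum_insert h, Finset.sum_insert h, Finset.sum_insert h, Finset.sum_insert h, ih]
    ext p <;> simp [Blk_apply]

lemma Blk_norm_le (A : H₁ →L[ℂ] H₁) (Y : H₂ →L[ℂ] H₁) (B : H₂ →L[ℂ] H₂) :
    ‖Blk A Y B‖ ≤ ‖A‖ + ‖Y‖ + ‖B‖ := by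
  refine opNorm_le_bound _ (by positivity) fun p => ?_
  rw [Blk_apply, Prod.norm_def]
  have h1 : ‖p.1‖ ≤ ‖p‖ := norm_fst_le p
  have h2 : ‖p.2‖ ≤ ‖p‖ := norm_snd_le p
  have hA : ‖A p.1 + Y p.2‖ ≤ (‖A‖ + ‖Y‖) * ‖p‖ := by
    calc ‖A p.1 + Y p.2‖ ≤ ‖A p.1‖ + ‖Y p.2‖ := norm_add_le _ _
      _ ≤ ‖A‖ * ‖p‖ + ‖Y‖ * ‖p‖ := add_le_add
          ((A.le_opNorm p.1).trans (mul_le_mul_of_nonneg_left h1 (norm_nonneg A)))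
          ((Y.le_opNorm p.2).trans (mul_le_mul_of_nonneg_left h2 (norm_nonneg Y)))
      _ = (‖A‖ + ‖Y‖) * ‖p‖ := by ring
  have hB : ‖B p.2‖ ≤ ‖B‖ * ‖p‖ :=
    (B.le_opNorm p.2).trans (mul_le_mul_of_nonneg_left h2 (norm_nonneg B))
  refine max_le (hA.trans ?_) (hB.trans ?_)
  · nlinarith [norm_nonneg B, norm_nonneg p]
  · nlinarith [norm_nonneg A, norm_nonneg Y, norm_nonneg p]
end Blk



/-- If `T₁, T₂` are polynomially bounded and `X : H₂ → H₁` satisfies `T₁^N X T₂^N = 0`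
for some `N ≥ 0`, then the block operator `R = [[T₁, X], [0, T₂]]` on `H₁ ⊕ H₂` is
polynomially bounded. -/
theorem block_polynomially_bounded {H₁ H₂ : Type*}
    [NormedAddCommGroup H₁] [InnerProductSpace ℂ H₁] [CompleteSpace H₁]
    [NormedAddCommGroup H₂] [InnerProductSpace ℂ H₂] [CompleteSpace H₂]
    (T₁ : H₁ →L[ℂ] H₁) (T₂ : H₂ →L[ℂ] H₂)
    (hT₁ : ∃ C > (0 : ℝ), ∀ φ : Polynomial ℂ, ‖Polynomial.aeval T₁ φ‖ ≤ C * discSupNorm φ)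
    (hT₂ : ∃ C > (0 : ℝ), ∀ φ : Polynomial ℂ, ‖Polynomial.aeval T₂ φ‖ ≤ C * discSupNorm φ)
    (X : H₂ →L[ℂ] H₁) (N : ℕ)
    (hX : (T₁ ^ N).comp (X.comp (T₂ ^ N)) = 0)
    (R : H₁ × H₂ →L[ℂ] H₁ × H₂)
    (hR : R = (T₁.comp (fst ℂ H₁ H₂) + X.comp (snd ℂ H₁ H₂)).prod (T₂.comp (snd ℂ H₁ H₂))) :
    ∃ C > (0 : ℝ), ∀ φ : Polynomial ℂ, ‖Polynomial.aeval R φ‖ ≤ C * discSupNorm φ := by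
  classical
  obtain ⟨C₁, hC₁pos, hC₁⟩ := hT₁
  obtain ⟨C₂, hC₂pos, hC₂⟩ := hT₂
  have hRB : R = Blk T₁ X T₂ := hR
  -- basic objects
  set W : ℕ → ℕ → (H₂ →L[ℂ] H₁) := fun j i => (T₁ ^ j).comp (X.comp (T₂ ^ i)) with hW
  set Dk : ℕ → (H₂ →L[ℂ] H₁) := fun k => ∑ j ∈ Finset.range k, W j (k - 1 - j) with hDk
  -- vanishing of W for large indices
  have hW0 : ∀ j i, N ≤ j → N ≤ i → W j i = 0 := by
    intro j i hj hi
    have h1 : T₁ ^ j = (T₁ ^ (j - N)).comp (T₁ ^ N) := by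
      rw [← mul_def, ← pow_add]; congr 1; omega
    have h2 : T₂ ^ i = (T₂ ^ N).comp (T₂ ^ (i - N)) := by
      rw [← mul_def, ← pow_add]; congr 1; omega
    ext v
    have := congrArg (fun (S : H₂ →L[ℂ] H₁) => (T₁ ^ (j - N)) (S ((T₂ ^ (i - N)) v))) hX
    simp only [comp_apply, zero_apply, map_zero] at this
    simp only [hW, comp_apply, h1, h2, zero_apply]
    exact this
  -- powers of R
  have hpow : ∀ k, R ^ k = Blk (T₁ ^ k) (Dk k) (T₂ ^ k) := by
    intro k
    induction k with
    | zero => simp [hDk, Blk_one]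
    | succ k ih =>
      have : R ^ (k + 1) = R.comp (R ^ k) := by rw [← mul_def, ← pow_succ']
      rw [this, ih, hRB, Blk_mul]
      congr 1
      · rw [← mul_def, ← pow_succ']
      · rw [hDk]
        simp only
        rw [Finset.sum_range_succ']
        have hTD : T₁.comp (∑ j ∈ Finset.range k, W j (k - 1 - j))
            = ∑ j ∈ Finset.range k, W (j + 1) (k + 1 - 1 - (j + 1)) := by
          ext v
          simp only [comp_apply, ← map_sum, ContinuousLinearMap.sum_apply]
          rw [map_sum]
          refine Finset.sum_congr rfl fun j hj => ?_
          have : k + 1 - 1 - (j + 1) = k - 1 - j := by omega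
          rw [this]
          simp [hW, comp_apply, pow_succ', mul_def]
        rw [← hTD]
        have hW0k : W 0 (k + 1 - 1 - 0) = X.comp (T₂ ^ k) := by
          simp [hW, ContinuousLinearMap.one_def]
        rw [hW0k]
      · rw [← mul_def, ← pow_succ']
  -- aeval block formula
  have heval : ∀ φ : Polynomial ℂ, Polynomial.aeval R φ =
      Blk (Polynomial.aeval T₁ φ) (∑ k ∈ Finset.range (φ.natDegree + 1), φ.coeff k • Dk k)
        (Polynomial.aeval T₂ φ) := by
    intro φ
    rw [Polynomial.aeval_eq_sum_range (p := φ) R, Polynomial.aeval_eq_sum_range (p := φ) T₁,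
      Polynomial.aeval_eq_sum_range (p := φ) T₂]
    rw [← Blk_sum]
    refine Finset.sum_congr rfl fun k _ => ?_
    rw [hpow k, Blk_smul]
  -- main estimate
  set KA : ℝ := ∑ j ∈ Finset.range N, ‖T₁ ^ j‖ * ‖X‖ * (C₂ * 2 ^ (j + 1)) with hKA
  set KB : ℝ := ∑ i ∈ Finset.range N, C₁ * 2 ^ (i + 1) * (‖X‖ * ‖T₂ ^ i‖) with hKB
  set KD : ℝ := ∑ j ∈ Finset.range N, ∑ i ∈ Finset.range N,
      2 ^ (j + i + 1) * (‖T₁ ^ j‖ * ‖X‖ * ‖T₂ ^ i‖) with hKD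
  have hKA0 : (0:ℝ) ≤ KA := by rw [hKA]; positivity
  have hKB0 : (0:ℝ) ≤ KB := by rw [hKB]; positivity
  have hKD0 : (0:ℝ) ≤ KD := by rw [hKD]; positivity
  refine ⟨C₁ + C₂ + KA + KB + KD, by linarith, ?_⟩
  intro φ
  set d := φ.natDegree with hd
  set M := d + N + 1 with hM
  set Q : Finset (ℕ × ℕ) := Finset.range M ×ˢ Finset.range M with hQ
  set F : ℕ × ℕ → (H₂ →L[ℂ] H₁) := fun p => φ.coeff (p.1 + p.2 + 1) • W p.1 p.2 with hF
  have hFzero : ∀ p : ℕ × ℕ, d < p.1 + p.2 + 1 → F p = 0 := by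
    intro p hp
    simp [hF, Polynomial.coeff_eq_zero_of_natDegree_lt hp]
  -- (1) the natural middle-corner sum equals the sum of F over Q
  have hstep1 : ∑ k ∈ Finset.range (d + 1), φ.coeff k • Dk k = ∑ p ∈ Q, F p := by
    have expand : ∑ k ∈ Finset.range (d + 1), φ.coeff k • Dk k
        = ∑ x ∈ (Finset.range (d + 1)).sigma (fun k => Finset.range k),
            F (x.2, x.1 - 1 - x.2) := by
      rw [Finset.sum_sigma]
      refine Finset.sum_congr rfl fun k hk => ?_
      rw [hDk]
      simp only [Finset.smul_sum]
      refine Finset.sum_congr rfl fun j hj => ?_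
      rw [Finset.mem_range] at hj
      have : j + (k - 1 - j) + 1 = k := by omega
      simp only [hF]
      rw [this]
    rw [expand]
    have sub : ∑ x ∈ (Finset.range (d + 1)).sigma (fun k => Finset.range k),
        F (x.2, x.1 - 1 - x.2)
        = ∑ p ∈ Q.filter (fun p => p.1 + p.2 + 1 ≤ d), F p := by
      refine Finset.sum_bij' (fun x _ => (x.2, x.1 - 1 - x.2))
        (fun p _ => ⟨p.1 + p.2 + 1, p.1⟩) ?_ ?_ ?_ ?_ ?_
      · rintro ⟨k, j⟩ hx
        simp only [Finset.mem_sigma, Finset.mem_range] at hx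
        simp only [Finset.mem_filter, hQ, Finset.mem_product, Finset.mem_range, hM]
        omega
      · rintro ⟨j, i⟩ hp
        simp only [Finset.mem_filter, hQ, Finset.mem_product, Finset.mem_range, hM] at hp
        simp only [Finset.mem_sigma, Finset.mem_range]
        omega
      · rintro ⟨k, j⟩ hx
        simp only [Finset.mem_sigma, Finset.mem_range] at hx
        simp only [Sigma.mk.inj_iff, heq_eq_eq]
        exact ⟨by omega, trivial⟩
      · rintro ⟨j, i⟩ hp
        simp only [Finset.mem_filter, hQ, Finset.mem_product, Finset.mem_range, hM] at hp
        simp only [Prod.mk.injEq]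
        exact ⟨trivial, by omega⟩
      · rintro ⟨k, j⟩ hx
        rfl
    rw [sub]
    refine Finset.sum_subset (Finset.filter_subset _ _) fun p hp hnp => ?_
    refine hFzero p ?_
    simp only [Finset.mem_filter, hp, true_and] at hnp
    omega
  -- (2) the A-term
  have hA_eq : ∀ j : ℕ, (T₁ ^ j).comp (X.comp (Polynomial.aeval T₂ (Polynomial.divX^[j+1] φ)))
      = ∑ m ∈ Finset.range (d + 1), F (j, m) := by
    intro j
    have hdeg : (Polynomial.divX^[j+1] φ).natDegree < d + 1 :=
      lt_of_le_of_lt (natDegree_divX_iterate_le φ (j+1)) (by omega)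
    rw [Polynomial.aeval_eq_sum_range' hdeg]
    ext v
    simp only [comp_apply, ContinuousLinearMap.sum_apply, smul_apply, map_sum, map_smul,
      hF, hW, coeff_divX_iterate]
    refine Finset.sum_congr rfl fun m _ => ?_
    rw [show m + (j + 1) = j + m + 1 by omega]
  have hA : ∑ j ∈ Finset.range N,
        (T₁ ^ j).comp (X.comp (Polynomial.aeval T₂ (Polynomial.divX^[j+1] φ)))
      = ∑ p ∈ Q.filter (fun p => p.1 < N), F p := by
    have hset : Q.filter (fun p => p.1 < N) = Finset.range N ×ˢ Finset.range M := by
      ext ⟨a, b⟩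
      simp only [Finset.mem_filter, hQ, Finset.mem_product, Finset.mem_range, hM]
      omega
    rw [hset, Finset.sum_product]
    refine Finset.sum_congr rfl fun j hj => ?_
    rw [hA_eq j]
    refine Finset.sum_subset ?_ fun m hm hnm => ?_
    · intro m hm; rw [Finset.mem_range] at hm ⊢; omega
    · rw [Finset.mem_range] at hm hnm
      exact hFzero (j, m) (by simp; omega)
  -- (3) the B-term
  have hB_eq : ∀ i : ℕ, (Polynomial.aeval T₁ (Polynomial.divX^[i+1] φ)).comp (X.comp (T₂ ^ i))
      = ∑ m ∈ Finset.range (d + 1), F (m, i) := by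
    intro i
    have hdeg : (Polynomial.divX^[i+1] φ).natDegree < d + 1 :=
      lt_of_le_of_lt (natDegree_divX_iterate_le φ (i+1)) (by omega)
    rw [Polynomial.aeval_eq_sum_range' hdeg]
    ext v
    simp only [comp_apply, ContinuousLinearMap.sum_apply, smul_apply, map_sum, map_smul,
      hF, hW, coeff_divX_iterate]
    refine Finset.sum_congr rfl fun m _ => ?_
    rw [show m + (i + 1) = m + i + 1 by omega]
  have hB : ∑ i ∈ Finset.range N,
        (Polynomial.aeval T₁ (Polynomial.divX^[i+1] φ)).comp (X.comp (T₂ ^ i))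
      = ∑ p ∈ Q.filter (fun p => p.2 < N), F p := by
    have hset : Q.filter (fun p => p.2 < N) = Finset.range M ×ˢ Finset.range N := by
      ext ⟨a, b⟩
      simp only [Finset.mem_filter, hQ, Finset.mem_product, Finset.mem_range, hM]
      omega
    rw [hset, Finset.sum_product]
    rw [Finset.sum_comm]
    refine Finset.sum_congr rfl fun i hi => ?_
    rw [hB_eq i]
    refine Finset.sum_subset ?_ fun m hm hnm => ?_
    · intro m hm; rw [Finset.mem_range] at hm ⊢; omega
    · rw [Finset.mem_range] at hm hnm
      exact hFzero (m, i) (by simp; omega)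
  -- (4) the D-term
  have hD : ∑ j ∈ Finset.range N, ∑ i ∈ Finset.range N, F (j, i)
      = ∑ p ∈ Q.filter (fun p => p.1 < N ∧ p.2 < N), F p := by
    have hset : Q.filter (fun p => p.1 < N ∧ p.2 < N) = Finset.range N ×ˢ Finset.range N := by
      ext ⟨a, b⟩
      simp only [Finset.mem_filter, hQ, Finset.mem_product, Finset.mem_range, hM]
      omega
    rw [hset, Finset.sum_product]
  -- (5) inclusion–exclusion
  have hsplit : ∑ p ∈ Q, F p =
      (∑ p ∈ Q.filter (fun p => p.1 < N), F p) + (∑ p ∈ Q.filter (fun p => p.2 < N), F p)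
        - ∑ p ∈ Q.filter (fun p => p.1 < N ∧ p.2 < N), F p := by
    have e1 : ∑ p ∈ Q, F p = (∑ p ∈ Q.filter (fun p => p.1 < N), F p)
        + ∑ p ∈ Q.filter (fun p => ¬ p.1 < N), F p :=
      (Finset.sum_filter_add_sum_filter_not Q _ F).symm
    have e2 : ∑ p ∈ Q.filter (fun p => ¬ p.1 < N), F p
        = (∑ p ∈ Q.filter (fun p => ¬ p.1 < N ∧ p.2 < N), F p)
          + ∑ p ∈ Q.filter (fun p => ¬ p.1 < N ∧ ¬ p.2 < N), F p := by
      rw [← Finset.filter_filter, ← Finset.filter_filter,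
        Finset.sum_filter_add_sum_filter_not]
    have e3 : ∑ p ∈ Q.filter (fun p => ¬ p.1 < N ∧ ¬ p.2 < N), F p = 0 := by
      refine Finset.sum_eq_zero fun p hp => ?_
      simp only [Finset.mem_filter, not_lt] at hp
      simp [hF, hW0 p.1 p.2 hp.2.1 hp.2.2]
    have e4 : ∑ p ∈ Q.filter (fun p => p.2 < N), F p
        = (∑ p ∈ Q.filter (fun p => p.1 < N ∧ p.2 < N), F p)
          + ∑ p ∈ Q.filter (fun p => ¬ p.1 < N ∧ p.2 < N), F p := by
      have c1 : Q.filter (fun p => p.1 < N ∧ p.2 < N)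
          = (Q.filter (fun p : ℕ × ℕ => p.2 < N)).filter (fun p => p.1 < N) := by
        rw [Finset.filter_filter]
        exact Finset.filter_congr fun p _ => by tauto
      have c2 : Q.filter (fun p => ¬ p.1 < N ∧ p.2 < N)
          = (Q.filter (fun p : ℕ × ℕ => p.2 < N)).filter (fun p => ¬ p.1 < N) := by
        rw [Finset.filter_filter]
        exact Finset.filter_congr fun p _ => by tauto
      rw [c1, c2, Finset.sum_filter_add_sum_filter_not]
    rw [e1, e2, e3, e4]
    abel
  -- the middle entry decomposition
  have hdelta : ∑ k ∈ Finset.range (d + 1), φ.coeff k • Dk k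
      = (∑ j ∈ Finset.range N,
          (T₁ ^ j).comp (X.comp (Polynomial.aeval T₂ (Polynomial.divX^[j+1] φ))))
        + (∑ i ∈ Finset.range N,
          (Polynomial.aeval T₁ (Polynomial.divX^[i+1] φ)).comp (X.comp (T₂ ^ i)))
        - ∑ j ∈ Finset.range N, ∑ i ∈ Finset.range N, F (j, i) := by
    rw [hstep1, hsplit, hA, hB, hD]
  -- norm estimates
  set Dφ := discSupNorm φ with hDφ
  have hDφ0 : 0 ≤ Dφ := discSupNorm_nonneg φ
  have hAnorm : ‖∑ j ∈ Finset.range N,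
      (T₁ ^ j).comp (X.comp (Polynomial.aeval T₂ (Polynomial.divX^[j+1] φ)))‖
      ≤ KA * Dφ := by
    rw [hKA, Finset.sum_mul]
    refine (norm_sum_le _ _).trans (Finset.sum_le_sum fun j _ => ?_)
    have h1 : ‖Polynomial.aeval T₂ (Polynomial.divX^[j+1] φ)‖ ≤ C₂ * (2 ^ (j + 1) * Dφ) := by
      exact (hC₂ _).trans
        (mul_le_mul_of_nonneg_left (discSupNorm_divX_iterate_le φ (j + 1)) hC₂pos.le)
    calc ‖(T₁ ^ j).comp (X.comp (Polynomial.aeval T₂ (Polynomial.divX^[j+1] φ)))‖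
        ≤ ‖T₁ ^ j‖ * (‖X‖ * ‖Polynomial.aeval T₂ (Polynomial.divX^[j+1] φ)‖) :=
          (opNorm_comp_le _ _).trans (by gcongr; exact opNorm_comp_le _ _)
      _ ≤ ‖T₁ ^ j‖ * (‖X‖ * (C₂ * (2 ^ (j + 1) * Dφ))) := by gcongr
      _ = ‖T₁ ^ j‖ * ‖X‖ * (C₂ * 2 ^ (j + 1)) * Dφ := by ring
  have hBnorm : ‖∑ i ∈ Finset.range N,
      (Polynomial.aeval T₁ (Polynomial.divX^[i+1] φ)).comp (X.comp (T₂ ^ i))‖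
      ≤ KB * Dφ := by
    rw [hKB, Finset.sum_mul]
    refine (norm_sum_le _ _).trans (Finset.sum_le_sum fun i _ => ?_)
    have h1 : ‖Polynomial.aeval T₁ (Polynomial.divX^[i+1] φ)‖ ≤ C₁ * (2 ^ (i + 1) * Dφ) := by
      exact (hC₁ _).trans
        (mul_le_mul_of_nonneg_left (discSupNorm_divX_iterate_le φ (i + 1)) hC₁pos.le)
    calc ‖(Polynomial.aeval T₁ (Polynomial.divX^[i+1] φ)).comp (X.comp (T₂ ^ i))‖
        ≤ ‖Polynomial.aeval T₁ (Polynomial.divX^[i+1] φ)‖ * (‖X‖ * ‖T₂ ^ i‖) :=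
          (opNorm_comp_le _ _).trans (by gcongr; exact opNorm_comp_le _ _)
      _ ≤ C₁ * (2 ^ (i + 1) * Dφ) * (‖X‖ * ‖T₂ ^ i‖) := by
          refine mul_le_mul_of_nonneg_right h1 (by positivity)
      _ = C₁ * 2 ^ (i + 1) * (‖X‖ * ‖T₂ ^ i‖) * Dφ := by ring
  have hDnorm : ‖∑ j ∈ Finset.range N, ∑ i ∈ Finset.range N, F (j, i)‖
      ≤ KD * Dφ := by
    rw [hKD, Finset.sum_mul]
    refine (norm_sum_le _ _).trans (Finset.sum_le_sum fun j _ => ?_)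
    rw [Finset.sum_mul]
    refine (norm_sum_le _ _).trans (Finset.sum_le_sum fun i _ => ?_)
    have hc : ‖φ.coeff (j + i + 1)‖ ≤ 2 ^ (j + i + 1) * Dφ := norm_coeff_le φ _
    have hw : ‖W j i‖ ≤ ‖T₁ ^ j‖ * (‖X‖ * ‖T₂ ^ i‖) :=
      (opNorm_comp_le _ _).trans (by gcongr; exact opNorm_comp_le _ _)
    calc ‖F (j, i)‖ = ‖φ.coeff (j + i + 1)‖ * ‖W j i‖ := by
          simp only [hF]; exact norm_smul (φ.coeff (j + i + 1)) (W j i)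
      _ ≤ (2 ^ (j + i + 1) * Dφ) * (‖T₁ ^ j‖ * (‖X‖ * ‖T₂ ^ i‖)) := by
          exact mul_le_mul hc hw (norm_nonneg _) (by positivity)
      _ = 2 ^ (j + i + 1) * (‖T₁ ^ j‖ * ‖X‖ * ‖T₂ ^ i‖) * Dφ := by ring
  have hmid : ‖∑ k ∈ Finset.range (d + 1), φ.coeff k • Dk k‖
      ≤ (KA + KB + KD) * Dφ := by
    rw [hdelta]
    have := norm_sub_le ((∑ j ∈ Finset.range N,
          (T₁ ^ j).comp (X.comp (Polynomial.aeval T₂ (Polynomial.divX^[j+1] φ))))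
        + (∑ i ∈ Finset.range N,
          (Polynomial.aeval T₁ (Polynomial.divX^[i+1] φ)).comp (X.comp (T₂ ^ i))))
        (∑ j ∈ Finset.range N, ∑ i ∈ Finset.range N, F (j, i))
    have hadd := norm_add_le (∑ j ∈ Finset.range N,
          (T₁ ^ j).comp (X.comp (Polynomial.aeval T₂ (Polynomial.divX^[j+1] φ))))
        (∑ i ∈ Finset.range N,
          (Polynomial.aeval T₁ (Polynomial.divX^[i+1] φ)).comp (X.comp (T₂ ^ i)))
    have hexp : (KA + KB + KD) * Dφ = KA * Dφ + KB * Dφ + KD * Dφ := by ring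
    rw [hexp]
    linarith [hAnorm, hBnorm, hDnorm]
  have hfinal : ‖Polynomial.aeval R φ‖
      ≤ ‖Polynomial.aeval T₁ φ‖ + ‖∑ k ∈ Finset.range (d + 1), φ.coeff k • Dk k‖
        + ‖Polynomial.aeval T₂ φ‖ := by
    rw [heval φ]
    exact Blk_norm_le _ _ _
  have h₁ := hC₁ φ
  have h₂ := hC₂ φ
  have hexp : (C₁ + C₂ + KA + KB + KD) * Dφ
      = C₁ * Dφ + C₂ * Dφ + (KA + KB + KD) * Dφ := by ring
  calc ‖Polynomial.aeval R φ‖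
      ≤ ‖Polynomial.aeval T₁ φ‖ + ‖∑ k ∈ Finset.range (d + 1), φ.coeff k • Dk k‖
        + ‖Polynomial.aeval T₂ φ‖ := hfinal
    _ ≤ C₁ * Dφ + (KA + KB + KD) * Dφ + C₂ * Dφ := by
        refine add_le_add (add_le_add h₁ hmid) h₂
    _ = (C₁ + C₂ + KA + KB + KD) * Dφ := by ring
end

section
/- Douglas's lemma: Let A : H → E and B : H → K be bounded operators between Hilbert spaces. If the range of A* is contained in the range of B*, then there exists a bounded operator L : K → E with A = L B. -/
open ContinuousLinearMap Filter Topology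

/-- Douglas's lemma: if `A : H → E` and `B : H → K` are bounded operators between Hilbert
spaces and the range of `A*` is contained in the range of `B*`, then there is a bounded
operator `L : K → E` with `A = L B`. -/
theorem douglas_lemma {H E K : Type*}
    [NormedAddCommGroup H] [InnerProductSpace ℂ H] [CompleteSpace H]
    [NormedAddCommGroup E] [InnerProductSpace ℂ E] [CompleteSpace E]
    [NormedAddCommGroup K] [InnerProductSpace ℂ K] [CompleteSpace K]
    (A : H →L[ℂ] E) (B : H →L[ℂ] K)
    (h : Set.range (ContinuousLinearMap.adjoint A) ⊆ Set.range (ContinuousLinearMap.adjoint B)) :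
    ∃ L : K →L[ℂ] E, A = L.comp B := by
  set S := ContinuousLinearMap.adjoint A with hS
  set T := ContinuousLinearMap.adjoint B with hT
  set N : Submodule ℂ K := LinearMap.ker (T : K →ₗ[ℂ] H) with hN
  have hNclosed : IsClosed (N : Set K) := ContinuousLinearMap.isClosed_ker T
  haveI : CompleteSpace N := hNclosed.completeSpace_coe
  set V : Submodule ℂ K := Nᗮ with hV
  have hVclosed : IsClosed (V : Set K) := N.isClosed_orthogonal
  -- uniqueness on V
  have uniq : ∀ x y : K, x ∈ V → y ∈ V → T x = T y → x = y := by
    intro x y hx hy hxy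
    have hker : x - y ∈ N := by
      simp [hN, LinearMap.mem_ker, map_sub, hxy]
    have hVm : x - y ∈ V := V.sub_mem hx hy
    have : x - y = 0 := by
      have h0 := (Submodule.mem_orthogonal N (x - y)).mp hVm (x - y) hker
      simpa [inner_self_eq_zero] using h0
    exact sub_eq_zero.mp this
  -- existence
  have exis : ∀ e : E, ∃ x : K, x ∈ V ∧ T x = S e := by
    intro e
    obtain ⟨y, hy⟩ := h ⟨e, rfl⟩
    refine ⟨y - (N.orthogonalProjectionOnto y : K), Submodule.sub_starProjection_mem_orthogonal (K := N) y, ?_⟩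
    have hm : ((N.orthogonalProjectionOnto y : K)) ∈ N := Submodule.coe_mem _
    have hm0 : T ((N.orthogonalProjectionOnto y : K)) = 0 := hm
    rw [map_sub, hm0, sub_zero, hy]
  -- the (nonlinear for now) choice function
  choose D hDV hDT using exis
  have Dadd : ∀ e₁ e₂, D (e₁ + e₂) = D e₁ + D e₂ := by
    intro e₁ e₂
    refine uniq _ _ (hDV _) (V.add_mem (hDV e₁) (hDV e₂)) ?_
    rw [hDT, map_add, map_add, hDT, hDT]
  have Dsmul : ∀ (c : ℂ) e, D (c • e) = c • D e := by
    intro c e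
    refine uniq _ _ (hDV _) (V.smul_mem c (hDV e)) ?_
    rw [hDT, map_smul, map_smul, hDT]
  let D₀ : E →ₗ[ℂ] K := { toFun := D, map_add' := Dadd, map_smul' := Dsmul }
  have hgraph : ∀ (u : ℕ → E) (x y), Tendsto u atTop (𝓝 x) →
      Tendsto (D₀ ∘ u) atTop (𝓝 y) → y = D₀ x := by
    intro u x y hu hDu
    refine uniq _ _ ?_ (hDV x) ?_
    · exact hVclosed.mem_of_tendsto hDu (Eventually.of_forall fun n => hDV (u n))
    · have h1 : Tendsto (fun n => T (D (u n))) atTop (𝓝 (T y)) :=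
        (T.continuous.tendsto y).comp hDu
      have h2 : Tendsto (fun n => T (D (u n))) atTop (𝓝 (S x)) := by
        have : (fun n => T (D (u n))) = fun n => S (u n) := by
          funext n; exact hDT (u n)
        rw [this]
        exact (S.continuous.tendsto x).comp hu
      show T y = T (D x)
      rw [hDT]
      exact tendsto_nhds_unique h1 h2
  let Dc : E →L[ℂ] K := ContinuousLinearMap.ofSeqClosedGraph hgraph
  refine ⟨ContinuousLinearMap.adjoint Dc, ?_⟩
  have key : T.comp Dc = S := by
    ext e
    exact hDT e
  have := congrArg ContinuousLinearMap.adjoint key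
  rw [ContinuousLinearMap.adjoint_comp, hS, hT, ContinuousLinearMap.adjoint_adjoint,
    ContinuousLinearMap.adjoint_adjoint] at this
  exact this.symm
end

section
/- Let Θ ∈ H^∞(B(E, E*)) be a contractive holomorphic function, Δ(e^{it}) = (I − Θ(e^{it})*Θ(e^{it}))^{1/2}, and M(Θ) = {Θu ⊕ Δu : u ∈ H²(E)} ⊆ H²(E*) ⊕ closure(Δ L²(E)). Then for every e* ∈ E*, the orthogonal projection of the constant function e* ⊕ 0 onto M(Θ) equals ΘΘ(0)* e* ⊕ ΔΘ(0)* e*. -/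
noncomputable section

/-- The vector-valued Hardy space `H²(E)`, realized as the space of square-summable
sequences of Taylor coefficients. -/
abbrev HardyS (E : Type*) [NormedAddCommGroup E] [InnerProductSpace ℂ E] :=
  lp (fun _ : ℕ => E) 2

/-- The vector-valued Lebesgue space `L²(E)` on the circle, realized as the space of
square-summable two-sided sequences of Fourier coefficients. -/
abbrev LebS (E : Type*) [NormedAddCommGroup E] [InnerProductSpace ℂ E] :=
  lp (fun _ : ℤ => E) 2

/-- Let `Θ ∈ H^∞(B(E,E*))` be contractive, with multiplication operator `MΘ` (given by the
Taylor coefficients `θ`), and let `MΔ` be multiplication by `Δ = (I − Θ*Θ)^{1/2}` on `L²(E)`,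
so that `u ↦ Θu ⊕ Δu` is isometric, `ι : H²(E) → L²(E)` being the natural inclusion.
Then for every `e* ∈ E*`, the orthogonal projection of `e* ⊕ 0` onto
`M(Θ) = {Θu ⊕ Δu : u ∈ H²(E)}` equals `ΘΘ(0)*e* ⊕ ΔΘ(0)*e*`: the latter lies in `M(Θ)`
and the difference is orthogonal to `M(Θ)`. -/
theorem projection_onto_MTheta {E Estar : Type*}
    [NormedAddCommGroup E] [InnerProductSpace ℂ E] [CompleteSpace E]
    [NormedAddCommGroup Estar] [InnerProductSpace ℂ Estar] [CompleteSpace Estar]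
    (θ : ℕ → E →L[ℂ] Estar)
    (MΘ : HardyS E →L[ℂ] HardyS Estar)
    (hMΘ : ∀ (u : HardyS E) (n : ℕ), (MΘ u) n = ∑ k ∈ Finset.range (n + 1), θ k (u (n - k)))
    (MΔ : LebS E →L[ℂ] LebS E)
    (ι : HardyS E →L[ℂ] LebS E)
    (hι : ∀ (u : HardyS E) (n : ℤ), (ι u) n = if 0 ≤ n then u n.toNat else 0)
    (hnorm : ∀ u : HardyS E, ‖MΘ u‖ ^ 2 + ‖MΔ (ι u)‖ ^ 2 = ‖u‖ ^ 2)
    (e : Estar) :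
    ((MΘ (lp.single 2 0 ((ContinuousLinearMap.adjoint (θ 0)) e)),
        MΔ (ι (lp.single 2 0 ((ContinuousLinearMap.adjoint (θ 0)) e)))) ∈
      Set.range (fun u : HardyS E => (MΘ u, MΔ (ι u)))) ∧
    ∀ u : HardyS E,
      (inner ℂ ((lp.single 2 0 e : HardyS Estar) -
          MΘ (lp.single 2 0 ((ContinuousLinearMap.adjoint (θ 0)) e))) (MΘ u) : ℂ) +
        (inner ℂ ((0 : LebS E) -
          MΔ (ι (lp.single 2 0 ((ContinuousLinearMap.adjoint (θ 0)) e)))) (MΔ (ι u)) : ℂ) = 0 := by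
  set v : HardyS E := lp.single 2 0 ((ContinuousLinearMap.adjoint (θ 0)) e) with hv
  let T : HardyS E →ₗᵢ[ℂ] WithLp 2 (HardyS Estar × LebS E) :=
    { toFun := fun u => (WithLp.equiv 2 _).symm (MΘ u, MΔ (ι u))
      map_add' := fun a b => by
        apply (WithLp.equiv 2 _).injective
        ext <;> simp
      map_smul' := fun c a => by
        apply (WithLp.equiv 2 _).injective
        ext <;> simp
      norm_map' := fun u => by
        have h1 : ‖(WithLp.equiv 2 (HardyS Estar × LebS E)).symm (MΘ u, MΔ (ι u))‖ ^ 2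
            = ‖u‖ ^ 2 := by
          rw [WithLp.prod_norm_sq_eq_of_L2]
          exact hnorm u
        have h2 := congrArg Real.sqrt h1
        rwa [Real.sqrt_sq (norm_nonneg _), Real.sqrt_sq (norm_nonneg _)] at h2 }
  have key : ∀ a b : HardyS E,
      (inner ℂ (MΘ a) (MΘ b) : ℂ) + inner ℂ (MΔ (ι a)) (MΔ (ι b)) = inner ℂ a b := by
    intro a b
    have h := T.inner_map_map a b
    rw [WithLp.prod_inner_apply] at h
    rw [show (T a).ofLp.1 = MΘ a from rfl, show (T a).ofLp.2 = MΔ (ι a) from rfl,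
      show (T b).ofLp.1 = MΘ b from rfl, show (T b).ofLp.2 = MΔ (ι b) from rfl] at h
    exact h
  refine ⟨⟨v, rfl⟩, fun u => ?_⟩
  have h0 : (MΘ u) 0 = θ 0 (u 0) := by simp [hMΘ u 0]
  have hl : (inner ℂ (lp.single 2 0 e : HardyS Estar) (MΘ u) : ℂ) = inner ℂ v u := by
    rw [lp.inner_single_left, hv, lp.inner_single_left, h0,
      ContinuousLinearMap.adjoint_inner_left]
  rw [inner_sub_left, inner_sub_left, inner_zero_left, hl]
  have h3 := key v u
  linear_combination -h3
end
end

section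
/- Let Θ ∈ H^∞(B(E, E*)) be contractive, and let H(Θ) = (H²(E*) ⊕ closure(Δ L²(E))) ⊖ M(Θ) be the Sz.-Nagy–Foias model space, with model operator S(Θ) = P_{H(Θ)} (S ⊕ U)|H(Θ). Then the range of S(Θ) equals {f₁ ⊕ f₂ ∈ H(Θ) : f₁(0) ∈ Θ(0)E}, i.e. those elements whose first component vanishes at 0 modulo the range of Θ(0). -/
noncomputable section

open scoped ENNReal

variable {E Estar : Type*}
  [NormedAddCommGroup E] [InnerProductSpace ℂ E] [CompleteSpace E]
  [NormedAddCommGroup Estar] [InnerProductSpace ℂ Estar] [CompleteSpace Estar]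

/-- The subspace `M(Θ) = {Θu ⊕ Δu : u ∈ H²(E)}`. -/
def Mset (MΘ : HardyS E →L[ℂ] HardyS Estar) (MΔ : LebS E →L[ℂ] LebS E)
    (ι : HardyS E →L[ℂ] LebS E) : Set (HardyS Estar × LebS E) :=
  Set.range fun u : HardyS E => (MΘ u, MΔ (ι u))

/-- The Sz.-Nagy--Foias model space
`H(Θ) = (H²(E*) ⊕ closure(Δ L²(E))) ⊖ M(Θ)`. -/
def HTheta (MΘ : HardyS E →L[ℂ] HardyS Estar) (MΔ : LebS E →L[ℂ] LebS E)
    (ι : HardyS E →L[ℂ] LebS E) : Set (HardyS Estar × LebS E) :=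
  {p | p.2 ∈ closure (Set.range MΔ) ∧
    ∀ u : HardyS E, (inner ℂ p.1 (MΘ u) : ℂ) + (inner ℂ p.2 (MΔ (ι u)) : ℂ) = 0}

omit [CompleteSpace E] in
lemma memℓp_backN (f : lp (fun _ : ℕ => E) 2) : Memℓp (fun n : ℕ => f (n + 1)) 2 := by
  apply memℓp_gen
  have hs : Summable fun n : ℕ => ‖f n‖ ^ (2 : ℝ≥0∞).toReal :=
    (memℓp_gen_iff (by norm_num)).1 (lp.memℓp f)
  exact (summable_nat_add_iff 1).2 hs

omit [CompleteSpace E] in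
lemma memℓp_backZ (f : lp (fun _ : ℤ => E) 2) : Memℓp (fun n : ℤ => f (n + 1)) 2 := by
  apply memℓp_gen
  have hs : Summable fun n : ℤ => ‖f n‖ ^ (2 : ℝ≥0∞).toReal :=
    (memℓp_gen_iff (by norm_num)).1 (lp.memℓp f)
  exact hs.comp_injective (add_left_injective (1 : ℤ))

omit [CompleteSpace E] in
lemma memℓp_shiftN (f : lp (fun _ : ℕ => E) 2) :
    Memℓp (fun n : ℕ => if n = 0 then (0 : E) else f (n - 1)) 2 := by
  apply memℓp_gen
  have hs : Summable fun n : ℕ => ‖f n‖ ^ (2 : ℝ≥0∞).toReal :=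
    (memℓp_gen_iff (by norm_num)).1 (lp.memℓp f)
  exact (summable_nat_add_iff 1).1 (hs.congr fun n => by simp)

set_option maxHeartbeats 1000000 in
/-- The range of the model operator `S(Θ) = P_{H(Θ)}(S ⊕ U)|H(Θ)` equals
`{f₁ ⊕ f₂ ∈ H(Θ) : f₁(0) ∈ Θ(0)E}`.  Here `S(Θ)` is characterized by: it maps `H(Θ)` to
`H(Θ)`, and for `p ∈ H(Θ)` the difference `(S ⊕ U)p − S(Θ)p` lies in the closure of
`M(Θ)` (i.e. `S(Θ)p` is the orthogonal projection of `(S ⊕ U)p` onto `H(Θ)`). -/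
theorem range_model_operator
    (θ : ℕ → E →L[ℂ] Estar)
    (MΘ : HardyS E →L[ℂ] HardyS Estar)
    (hMΘ : ∀ (u : HardyS E) (n : ℕ), (MΘ u) n = ∑ k ∈ Finset.range (n + 1), θ k (u (n - k)))
    (MΔ : LebS E →L[ℂ] LebS E)
    (ι : HardyS E →L[ℂ] LebS E)
    (hι : ∀ (u : HardyS E) (n : ℤ), (ι u) n = if 0 ≤ n then u n.toNat else 0)
    (hnorm : ∀ u : HardyS E, ‖MΘ u‖ ^ 2 + ‖MΔ (ι u)‖ ^ 2 = ‖u‖ ^ 2)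
    (Sop : HardyS Estar →L[ℂ] HardyS Estar)
    (hS : ∀ (f : HardyS Estar) (n : ℕ), (Sop f) n = if n = 0 then 0 else f (n - 1))
    (Uop : LebS E →L[ℂ] LebS E)
    (hU : ∀ (f : LebS E) (n : ℤ), (Uop f) n = f (n - 1))
    (hcomm : ∀ f : LebS E, MΔ (Uop f) = Uop (MΔ f))
    (SΘ : HardyS Estar × LebS E →L[ℂ] HardyS Estar × LebS E)
    (hSΘmem : ∀ p ∈ HTheta MΘ MΔ ι, SΘ p ∈ HTheta MΘ MΔ ι)
    (hSΘproj : ∀ p ∈ HTheta MΘ MΔ ι,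
      ((Sop p.1, Uop p.2) : HardyS Estar × LebS E) - SΘ p ∈ closure (Mset MΘ MΔ ι)) :
    SΘ '' HTheta MΘ MΔ ι =
      {p | p ∈ HTheta MΘ MΔ ι ∧ ∃ x : E, (p.1) 0 = θ 0 x} := by
  classical
  -- The canonical isometry `V : H²(E) → H²(E*) ⊕₂ L²(E)`.
  set e := WithLp.prodContinuousLinearEquiv 2 ℂ (HardyS Estar) (LebS E) with he
  set V : HardyS E →ₗᵢ[ℂ] WithLp 2 (HardyS Estar × LebS E) :=
    { toLinearMap := (e.symm.toContinuousLinearMap.comp (MΘ.prod (MΔ.comp ι))).toLinearMap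
      norm_map' := fun u => by
        have h1 : ‖e.symm (MΘ u, MΔ (ι u))‖ ^ 2
            = ‖MΘ u‖ ^ 2 + ‖MΔ (ι u)‖ ^ 2 := by
          rw [WithLp.prod_norm_sq_eq_of_L2]; rfl
        have h2 : ‖e.symm (MΘ u, MΔ (ι u))‖ ^ 2 = ‖u‖ ^ 2 := by rw [h1, hnorm]
        calc ‖e.symm (MΘ u, MΔ (ι u))‖
            = Real.sqrt (‖e.symm (MΘ u, MΔ (ι u))‖ ^ 2) := (Real.sqrt_sq (norm_nonneg _)).symm
          _ = Real.sqrt (‖u‖ ^ 2) := by rw [h2]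
          _ = ‖u‖ := Real.sqrt_sq (norm_nonneg _) } with hV
  have Vinner : ∀ a b : HardyS E,
      (inner ℂ (MΘ a) (MΘ b) : ℂ) + (inner ℂ (MΔ (ι a)) (MΔ (ι b)) : ℂ) = inner ℂ a b := by
    intro a b
    have h := V.inner_map_map a b
    rw [WithLp.prod_inner_apply] at h
    exact h
  have hzero : ∀ m : HardyS E,
      (inner ℂ (MΘ m) (MΘ m) : ℂ) + (inner ℂ (MΔ (ι m)) (MΔ (ι m)) : ℂ) = 0 → m = 0 := by
    intro m hm
    rw [Vinner] at hm
    exact inner_self_eq_zero.1 hm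
  -- `M(Θ)` is closed.
  have hMclosed : closure (Mset MΘ MΔ ι) = Mset MΘ MΔ ι := by
    have h1 : Mset MΘ MΔ ι = e '' Set.range V := by
      ext z
      constructor
      · rintro ⟨u, rfl⟩; exact ⟨V u, ⟨u, rfl⟩, rfl⟩
      · rintro ⟨_, ⟨u, rfl⟩, rfl⟩; exact ⟨u, rfl⟩
    rw [h1]
    exact ((e.toHomeomorph.isClosed_image).2
      V.isometry.isClosedEmbedding.isClosed_range).closure_eq
  -- `U` is an isometry.
  have hUiso : ∀ f : LebS E, ‖Uop f‖ = ‖f‖ := by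
    intro f
    have h1 : (inner ℂ (Uop f) (Uop f) : ℂ) = inner ℂ f f := by
      rw [lp.inner_eq_tsum, lp.inner_eq_tsum]
      have h2 : ∀ n : ℤ, (inner ℂ ((Uop f) n) ((Uop f) n) : ℂ)
          = (fun m : ℤ => (inner ℂ (f m) (f m) : ℂ)) (n - 1) := by
        intro n; rw [hU]
      rw [tsum_congr h2]
      exact (Equiv.subRight (1 : ℤ)).tsum_eq fun m : ℤ => (inner ℂ (f m) (f m) : ℂ)
    rw [@norm_eq_sqrt_re_inner ℂ _ _ _ _ (Uop f), @norm_eq_sqrt_re_inner ℂ _ _ _ _ f, h1]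
  ext q
  constructor
  · -- forward inclusion
    rintro ⟨p, hp, rfl⟩
    refine ⟨hSΘmem p hp, ?_⟩
    have h2 := hSΘproj p hp
    rw [hMclosed] at h2
    obtain ⟨m, hm⟩ := h2
    have hm1 : MΘ m = Sop p.1 - (SΘ p).1 := by
      have := congrArg Prod.fst hm; simpa using this
    have h3 : (SΘ p).1 = Sop p.1 - MΘ m := by rw [hm1]; abel
    refine ⟨-(m 0), ?_⟩
    have h4 : ((SΘ p).1 : ∀ _ : ℕ, Estar) 0 = (Sop p.1) 0 - (MΘ m) 0 := by
      rw [h3, lp.coeFn_sub, Pi.sub_apply]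
    rw [h4, hS, hMΘ]
    simp [map_neg]
  · -- reverse inclusion
    rintro ⟨hq, x, hx⟩
    set u : HardyS E := lp.single 2 0 (-x) with hu
    set g : HardyS Estar := q.1 + MΘ u with hgdef
    set h : LebS E := q.2 + MΔ (ι u) with hhdef
    have hMΘu0 : (MΘ u) 0 = θ 0 (-x) := by
      rw [hMΘ]
      simp [hu, lp.single_apply_self]
    have hg0 : (g : ∀ _ : ℕ, Estar) 0 = 0 := by
      rw [hgdef, lp.coeFn_add, Pi.add_apply, hx, hMΘu0, map_neg, add_neg_cancel]
    set p1 : HardyS Estar := ⟨fun n => g (n + 1), memℓp_backN g⟩ with hp1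
    set p2 : LebS E := ⟨fun n => h (n + 1), memℓp_backZ h⟩ with hp2
    have hp1app : ∀ n : ℕ, (p1 : ∀ _ : ℕ, Estar) n = g (n + 1) := fun _ => rfl
    have hp2app : ∀ n : ℤ, (p2 : ∀ _ : ℤ, E) n = h (n + 1) := fun _ => rfl
    have hSp1 : Sop p1 = g := by
      apply lp.ext; funext n
      rw [hS]
      cases n with
      | zero => simpa using hg0.symm
      | succ k => simp [hp1app]
    have hUp2 : Uop p2 = h := by
      apply lp.ext; funext n
      rw [hU, hp2app]
      have h9 : n - 1 + 1 = n := by ring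
      rw [h9]
    -- first membership condition
    have hclos_add : ∀ a b : LebS E, a ∈ closure (Set.range ⇑MΔ) →
        b ∈ closure (Set.range ⇑MΔ) → a + b ∈ closure (Set.range ⇑MΔ) := by
      intro a b ha hb
      rw [← ContinuousLinearMap.coe_coe MΔ, ← LinearMap.coe_range,
        ← Submodule.topologicalClosure_coe] at ha hb ⊢
      exact Submodule.add_mem _ ha hb
    have hh_cl : h ∈ closure (Set.range ⇑MΔ) :=
      hclos_add _ _ hq.1 (subset_closure ⟨ι u, rfl⟩)
    have hp2cl : p2 ∈ closure (Set.range ⇑MΔ) := by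
      rw [mem_closure_iff_seq_limit] at hh_cl ⊢
      obtain ⟨y, hy_mem, hy_t⟩ := hh_cl
      choose f hf using hy_mem
      set w : ℕ → LebS E := fun k => ⟨fun n => (f k) (n + 1), memℓp_backZ (f k)⟩ with hw
      have hUw : ∀ k, Uop (w k) = f k := by
        intro k
        apply lp.ext; funext n
        rw [hU]
        show (f k) (n - 1 + 1) = f k n
        have h9 : n - 1 + 1 = n := by ring
        rw [h9]
      refine ⟨fun k => MΔ (w k), fun k => ⟨w k, rfl⟩, ?_⟩
      have key : ∀ k, dist (MΔ (w k)) p2 = dist (y k) h := by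
        intro k
        rw [dist_eq_norm, dist_eq_norm, ← hUiso (MΔ (w k) - p2), map_sub, ← hcomm, hUw, hf,
          hUp2]
      rw [tendsto_iff_dist_tendsto_zero] at hy_t ⊢
      simpa [key] using hy_t
    -- second membership condition
    have hortho : ∀ v : HardyS E,
        (inner ℂ (p1 : HardyS Estar) (MΘ v) : ℂ) + (inner ℂ (p2 : LebS E) (MΔ (ι v)) : ℂ) = 0 := by
      intro v
      set w : HardyS E := ⟨fun n => if n = 0 then 0 else v (n - 1), memℓp_shiftN v⟩ with hwdef
      have hwapp : ∀ n : ℕ, (w : ∀ _ : ℕ, E) n = if n = 0 then 0 else v (n - 1) := fun _ => rfl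
      have hw0 : (w : ∀ _ : ℕ, E) 0 = 0 := rfl
      have hMΘw : ∀ n : ℕ, (MΘ w) n = if n = 0 then 0 else (MΘ v) (n - 1) := by
        intro n
        cases n with
        | zero => rw [hMΘ]; simp [hwapp]
        | succ k =>
          rw [hMΘ, hMΘ, if_neg (Nat.succ_ne_zero k), Nat.add_sub_cancel,
            Finset.sum_range_succ]
          have h1 : θ (k + 1) ((w : ∀ _ : ℕ, E) (k + 1 - (k + 1))) = 0 := by
            rw [hwapp]; simp
          rw [h1, add_zero]
          refine Finset.sum_congr rfl fun j hj => ?_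
          have hj' : j ≤ k := Nat.lt_succ_iff.1 (Finset.mem_range.1 hj)
          rw [hwapp, show k + 1 - j = (k - j) + 1 from by omega]
          simp
      have hιw : ι w = Uop (ι v) := by
        apply lp.ext; funext n
        rw [hι, hU, hι]
        by_cases h1 : (1 : ℤ) ≤ n
        · rw [if_pos (show (0 : ℤ) ≤ n by omega), if_pos (show (0 : ℤ) ≤ n - 1 by omega),
            hwapp, if_neg (show ¬ n.toNat = 0 by omega),
            show (n - 1).toNat = n.toNat - 1 from by omega]
        · by_cases h0 : n = 0
          · subst h0
            rw [if_pos le_rfl, if_neg (show ¬ (0 : ℤ) ≤ 0 - 1 by omega)]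
            exact hw0
          · rw [if_neg (show ¬ (0 : ℤ) ≤ n by omega),
              if_neg (show ¬ (0 : ℤ) ≤ n - 1 by omega)]
      have hMΔιw : MΔ (ι w) = Uop (MΔ (ι v)) := by rw [hιw, hcomm]
      have hA : (inner ℂ (p1 : HardyS Estar) (MΘ v) : ℂ) = inner ℂ g (MΘ w) := by
        rw [lp.inner_eq_tsum, lp.inner_eq_tsum]
        have hsum : Summable fun n : ℕ => (inner ℂ (g n) ((MΘ w) n) : ℂ) :=
          lp.summable_inner g (MΘ w)
        rw [Summable.tsum_eq_zero_add hsum]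
        have h0 : (inner ℂ (g 0) ((MΘ w) 0) : ℂ) = 0 := by
          rw [hMΘw]; simp
        rw [h0, zero_add]
        apply tsum_congr
        intro n
        rw [hp1app, hMΘw]
        simp
      have hB : (inner ℂ (p2 : LebS E) (MΔ (ι v)) : ℂ) = inner ℂ h (MΔ (ι w)) := by
        rw [lp.inner_eq_tsum, lp.inner_eq_tsum]
        have h2 : ∀ n : ℤ, (inner ℂ (p2 n) ((MΔ (ι v)) n) : ℂ)
            = (fun m : ℤ => (inner ℂ (h m) ((MΔ (ι v)) (m - 1)) : ℂ)) (n + 1) := by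
          intro n
          rw [hp2app]
          simp
        rw [tsum_congr h2]
        refine ((Equiv.addRight (1 : ℤ)).tsum_eq
          (fun m : ℤ => (inner ℂ (h m) ((MΔ (ι v)) (m - 1)) : ℂ))).trans ?_
        apply tsum_congr
        intro n
        rw [hMΔιw, hU]
      rw [hA, hB, hgdef, hhdef, inner_add_left, inner_add_left]
      have hq2 := hq.2 w
      have hVi := Vinner u w
      have hw0' : (inner ℂ u w : ℂ) = 0 := by
        rw [hu, lp.inner_single_left, hw0, inner_zero_right]
      linear_combination hq2 + hVi + hw0'
    have hpmem : ((p1, p2) : HardyS Estar × LebS E) ∈ HTheta MΘ MΔ ι := ⟨hp2cl, hortho⟩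
    -- conclude
    have hproj := hSΘproj (p1, p2) hpmem
    rw [hMclosed] at hproj
    obtain ⟨m, hm⟩ := hproj
    have hm1 : MΘ m = Sop p1 - (SΘ (p1, p2)).1 := by
      have := congrArg Prod.fst hm; simpa using this
    have hm2 : MΔ (ι m) = Uop p2 - (SΘ (p1, p2)).2 := by
      have := congrArg Prod.snd hm; simpa using this
    have hq1eq : q.1 - (SΘ (p1, p2)).1 = MΘ (m - u) := by
      rw [map_sub, hm1, hSp1, hgdef]; abel
    have hq2eq : q.2 - (SΘ (p1, p2)).2 = MΔ (ι (m - u)) := by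
      rw [map_sub, map_sub, hm2, hUp2, hhdef]; abel
    have hmu : m - u = 0 := by
      apply hzero
      have e1 := hq.2 (m - u)
      have e2 := (hSΘmem (p1, p2) hpmem).2 (m - u)
      have h5 : (inner ℂ (MΘ (m - u)) (MΘ (m - u)) : ℂ)
          + (inner ℂ (MΔ (ι (m - u))) (MΔ (ι (m - u))) : ℂ)
          = ((inner ℂ q.1 (MΘ (m - u)) : ℂ) + (inner ℂ q.2 (MΔ (ι (m - u))) : ℂ))
            - ((inner ℂ (SΘ (p1, p2)).1 (MΘ (m - u)) : ℂ)
              + (inner ℂ (SΘ (p1, p2)).2 (MΔ (ι (m - u))) : ℂ)) := by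
        rw [← hq1eq, ← hq2eq, inner_sub_left, inner_sub_left]
        ring
      rw [h5, e1, e2, sub_zero]
    have hfinal : SΘ (p1, p2) = q := by
      have h6 := hq1eq
      have h7 := hq2eq
      rw [hmu, map_zero] at h6
      rw [hmu, map_zero, map_zero] at h7
      have h6' : q.1 = (SΘ (p1, p2)).1 := by
        have := sub_eq_zero.1 h6; exact this
      have h7' : q.2 = (SΘ (p1, p2)).2 := sub_eq_zero.1 h7
      exact Prod.ext h6'.symm h7'.symm
    exact ⟨(p1, p2), hpmem, hfinal⟩
end
end
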